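/- arXiv:2301.09529 — 6 statements merged into one kernel-verified Lean document; each statement's English description precedes it below -/
import Mathlib

section
/- An atomic amalgam of Kleene lattices is a paraorthomodular lattice if and only if it contains no atomic loop of order 3 or 4. -/
/-- A pasted family of finite Kleene lattices over a common carrier `K`,
indexed by `ι`.  Each block `blk i` carries a bounded distributive lattice
structure `(le i, inf i, sup i, bot, top)` with an antitone involution `compl`
which is paraorthomodular and regular (i.e. each block is a Kleene lattice)
and has at least 6 elements.  Any two distinct blocks intersect either in
`{bot, top}` or in a common atomic Kleene subalgebra of at most 4 elements on
which the operations coincide and whose elements other than `bot`, `top` are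
simultaneously atoms or simultaneously coatoms of both blocks. -/
structure PastedFamily (K : Type*) (ι : Type*) where
  blk : ι → Set K
  cover : ∀ x : K, ∃ i, x ∈ blk i
  le : ι → K → K → Prop
  inf : ι → K → K → K
  sup : ι → K → K → K
  compl : K → K
  bot : K
  top : K
  bot_mem : ∀ i, bot ∈ blk i
  top_mem : ∀ i, top ∈ blk i
  finite : ∀ i, (blk i).Finite
  card6 : ∀ i, 6 ≤ (blk i).ncard
  le_refl : ∀ i x, x ∈ blk i → le i x x
  le_antisymm' : ∀ i x y, le i x y → le i y x → x = y
  le_trans' : ∀ i x y z, le i x y → le i y z → le i x z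
  bot_le : ∀ i x, x ∈ blk i → le i bot x
  le_top : ∀ i x, x ∈ blk i → le i x top
  inf_mem : ∀ i x y, x ∈ blk i → y ∈ blk i → inf i x y ∈ blk i
  sup_mem : ∀ i x y, x ∈ blk i → y ∈ blk i → sup i x y ∈ blk i
  inf_le_left : ∀ i x y, x ∈ blk i → y ∈ blk i → le i (inf i x y) x
  inf_le_right : ∀ i x y, x ∈ blk i → y ∈ blk i → le i (inf i x y) y
  le_inf : ∀ i x y z, x ∈ blk i → y ∈ blk i → z ∈ blk i →
    le i z x → le i z y → le i z (inf i x y)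
  le_sup_left : ∀ i x y, x ∈ blk i → y ∈ blk i → le i x (sup i x y)
  le_sup_right : ∀ i x y, x ∈ blk i → y ∈ blk i → le i y (sup i x y)
  sup_le : ∀ i x y z, x ∈ blk i → y ∈ blk i → z ∈ blk i →
    le i x z → le i y z → le i (sup i x y) z
  distrib : ∀ i x y z, x ∈ blk i → y ∈ blk i → z ∈ blk i →
    inf i x (sup i y z) = sup i (inf i x y) (inf i x z)
  compl_mem : ∀ i x, x ∈ blk i → compl x ∈ blk i
  compl_antitone : ∀ i x y, x ∈ blk i → y ∈ blk i → le i x y →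
    le i (compl y) (compl x)
  compl_invol : ∀ x, compl (compl x) = x
  /-- Each block is paraorthomodular. -/
  blockParaOM : ∀ i x y, x ∈ blk i → y ∈ blk i → le i x y →
    inf i (compl x) y = bot → x = y
  /-- Each block is regular (Kleene condition). -/
  regular : ∀ i x y, x ∈ blk i → y ∈ blk i →
    le i (inf i x (compl x)) (sup i y (compl y))
  /-- The block orders agree on intersections of blocks. -/
  le_compat : ∀ i j x y, x ∈ blk i → y ∈ blk i → x ∈ blk j → y ∈ blk j →
    le i x y → le j x y
  /-- Pasting condition on the intersection of two distinct blocks. -/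
  inter : ∀ i j, i ≠ j → blk i ∩ blk j = {bot, top} ∨
    ((blk i ∩ blk j).ncard ≤ 4 ∧
     bot ∈ blk i ∩ blk j ∧ top ∈ blk i ∩ blk j ∧
     (∀ x ∈ blk i ∩ blk j, compl x ∈ blk i ∩ blk j) ∧
     (∀ x y, x ∈ blk i ∩ blk j → y ∈ blk i ∩ blk j →
       inf i x y = inf j x y ∧ inf i x y ∈ blk i ∩ blk j ∧
       sup i x y = sup j x y ∧ sup i x y ∈ blk i ∩ blk j) ∧
     (∀ x ∈ blk i ∩ blk j, x ≠ bot → x ≠ top →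
       ((x ≠ bot ∧ ∀ z ∈ blk i, le i z x → z = bot ∨ z = x) ∧
        (x ≠ bot ∧ ∀ z ∈ blk j, le j z x → z = bot ∨ z = x)) ∨
       ((x ≠ top ∧ ∀ z ∈ blk i, le i x z → z = top ∨ z = x) ∧
        (x ≠ top ∧ ∀ z ∈ blk j, le j x z → z = top ∨ z = x))))

namespace PastedFamily

variable {K ι : Type*} (A : PastedFamily K ι)

/-- The order of the atomic amalgam: `x ≤ y` iff `x ≤ y` in some block. -/
def gle (x y : K) : Prop := ∃ i, x ∈ A.blk i ∧ y ∈ A.blk i ∧ A.le i x y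

/-- `s` is the least upper bound of `x` and `y` in the amalgam. -/
def IsLubA (x y s : K) : Prop :=
  A.gle x s ∧ A.gle y s ∧ ∀ z, A.gle x z → A.gle y z → A.gle s z

/-- `m` is the greatest lower bound of `x` and `y` in the amalgam. -/
def IsGlbA (x y m : K) : Prop :=
  A.gle m x ∧ A.gle m y ∧ ∀ z, A.gle z x → A.gle z y → A.gle z m

/-- Paraorthomodularity of the amalgam: `x ≤ y` and `x' ∧ y = 0`
(i.e. the lower cone `L(x', y)` is `{0}`) imply `x = y`. -/
def ParaOM : Prop := ∀ x y, A.gle x y →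
  (∀ z, A.gle z (A.compl x) → A.gle z y → z = A.bot) → x = y

/-- Blocks `i, j, k` form an atomic loop of order 3: consecutive (cyclic)
intersections have exactly 4 elements and the triple intersection is `{0,1}`. -/
def AtomicLoop3 (i j k : ι) : Prop :=
  (A.blk i ∩ A.blk j).ncard = 4 ∧ (A.blk j ∩ A.blk k).ncard = 4 ∧
  (A.blk k ∩ A.blk i).ncard = 4 ∧
  A.blk i ∩ A.blk j ∩ A.blk k = {A.bot, A.top}

/-- Blocks `i, j, k, l` form an atomic loop of order 4. -/
def AtomicLoop4 (i j k l : ι) : Prop :=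
  (A.blk i ∩ A.blk j).ncard = 4 ∧ (A.blk j ∩ A.blk k).ncard = 4 ∧
  (A.blk k ∩ A.blk l).ncard = 4 ∧ (A.blk l ∩ A.blk i).ncard = 4 ∧
  A.blk i ∩ A.blk k = {A.bot, A.top} ∧ A.blk j ∩ A.blk l = {A.bot, A.top} ∧
  A.blk i ∩ A.blk j ∩ A.blk k = {A.bot, A.top} ∧
  A.blk i ∩ A.blk j ∩ A.blk l = {A.bot, A.top} ∧
  A.blk i ∩ A.blk k ∩ A.blk l = {A.bot, A.top} ∧
  A.blk j ∩ A.blk k ∩ A.blk l = {A.bot, A.top}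

end PastedFamily


namespace PastedFamily

variable {K ι : Type*} (A : PastedFamily K ι)

lemma blk_not_small (i : ι) (s : Set K) (hfin : s.Finite) (hcard : s.ncard ≤ 5)
    (hsub : A.blk i ⊆ s) : False := by
  have h1 := Set.ncard_le_ncard hsub hfin
  have h2 := A.card6 i
  omega

lemma ncard_le_four (a b c d : K) : ({a, b, c, d} : Set K).ncard ≤ 4 := by
  have h1 : ({d} : Set K).ncard = 1 := Set.ncard_singleton d
  have h2 := Set.ncard_insert_le c ({d} : Set K)
  have h3 := Set.ncard_insert_le b ({c, d} : Set K)
  have h4 := Set.ncard_insert_le a ({b, c, d} : Set K)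
  omega

lemma bot_ne_top : A.bot ≠ A.top := by
  intro h
  obtain ⟨i, _⟩ := A.cover A.bot
  refine A.blk_not_small i {A.bot} (Set.finite_singleton _) (by simp) ?_
  intro x hx
  have h2 := A.le_top i x hx
  rw [← h] at h2
  simp [A.le_antisymm' i x A.bot h2 (A.bot_le i x hx)]

lemma compl_bot : A.compl A.bot = A.top := by
  obtain ⟨i, hi⟩ := A.cover (A.compl A.bot)
  have hct : A.compl A.top ∈ A.blk i := A.compl_mem i _ (A.top_mem i)
  have h2 := A.compl_antitone i _ _ (A.bot_mem i) hct (A.bot_le i _ hct)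
  rw [A.compl_invol] at h2
  exact A.le_antisymm' i _ _ (A.le_top i _ hi) h2

lemma compl_top : A.compl A.top = A.bot := by
  rw [← A.compl_bot, A.compl_invol]

lemma compl_inj {x y : K} (h : A.compl x = A.compl y) : x = y := by
  have := congrArg A.compl h
  rwa [A.compl_invol, A.compl_invol] at this

lemma gle_refl (x : K) : A.gle x x := by
  obtain ⟨i, hi⟩ := A.cover x
  exact ⟨i, hi, hi, A.le_refl i x hi⟩

lemma gle_top (x : K) : A.gle x A.top := by
  obtain ⟨i, hi⟩ := A.cover x
  exact ⟨i, hi, A.top_mem i, A.le_top i x hi⟩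

lemma gle_bot (x : K) : A.gle A.bot x := by
  obtain ⟨i, hi⟩ := A.cover x
  exact ⟨i, A.bot_mem i, hi, A.bot_le i x hi⟩

lemma gle_antisymm {x y : K} (h1 : A.gle x y) (h2 : A.gle y x) : x = y := by
  obtain ⟨i, hxi, hyi, h1⟩ := h1
  obtain ⟨j, hyj, hxj, h2⟩ := h2
  exact A.le_antisymm' i x y h1 (A.le_compat j i y x hyj hxj hyi hxi h2)

lemma gle_eq_top {x : K} (h : A.gle A.top x) : x = A.top :=
  A.gle_antisymm (A.gle_top x) h

lemma gle_eq_bot {x : K} (h : A.gle x A.bot) : x = A.bot :=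
  A.gle_antisymm h (A.gle_bot x)

lemma gle_compl {x y : K} (h : A.gle x y) : A.gle (A.compl y) (A.compl x) := by
  obtain ⟨i, hx, hy, h⟩ := h
  exact ⟨i, A.compl_mem i y hy, A.compl_mem i x hx, A.compl_antitone i x y hx hy h⟩

section InBlock

variable {i : ι} {x y z : K}

lemma inf_comm (hx : x ∈ A.blk i) (hy : y ∈ A.blk i) : A.inf i x y = A.inf i y x :=
  A.le_antisymm' i _ _
    (A.le_inf i y x _ hy hx (A.inf_mem i x y hx hy) (A.inf_le_right i x y hx hy)
      (A.inf_le_left i x y hx hy))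
    (A.le_inf i x y _ hx hy (A.inf_mem i y x hy hx) (A.inf_le_right i y x hy hx)
      (A.inf_le_left i y x hy hx))

lemma sup_comm (hx : x ∈ A.blk i) (hy : y ∈ A.blk i) : A.sup i x y = A.sup i y x :=
  A.le_antisymm' i _ _
    (A.sup_le i x y _ hx hy (A.sup_mem i y x hy hx) (A.le_sup_right i y x hy hx)
      (A.le_sup_left i y x hy hx))
    (A.sup_le i y x _ hy hx (A.sup_mem i x y hx hy) (A.le_sup_right i x y hx hy)
      (A.le_sup_left i x y hx hy))

lemma sup_bot_left (hx : x ∈ A.blk i) : A.sup i A.bot x = x :=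
  A.le_antisymm' i _ _
    (A.sup_le i A.bot x x (A.bot_mem i) hx hx (A.bot_le i x hx) (A.le_refl i x hx))
    (A.le_sup_right i A.bot x (A.bot_mem i) hx)

lemma sup_bot_right (hx : x ∈ A.blk i) : A.sup i x A.bot = x := by
  rw [A.sup_comm hx (A.bot_mem i), A.sup_bot_left hx]

lemma inf_top_right (hx : x ∈ A.blk i) : A.inf i x A.top = x :=
  A.le_antisymm' i _ _ (A.inf_le_left i x A.top hx (A.top_mem i))
    (A.le_inf i x A.top x hx (A.top_mem i) hx (A.le_refl i x hx) (A.le_top i x hx))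

lemma inf_top_left (hx : x ∈ A.blk i) : A.inf i A.top x = x := by
  rw [A.inf_comm (A.top_mem i) hx, A.inf_top_right hx]

lemma eq_bot_of_le_bot (hx : x ∈ A.blk i) (h : A.le i x A.bot) : x = A.bot :=
  A.le_antisymm' i _ _ h (A.bot_le i x hx)

lemma eq_top_of_top_le (hx : x ∈ A.blk i) (h : A.le i A.top x) : x = A.top :=
  A.le_antisymm' i _ _ (A.le_top i x hx) h

lemma absorb_inf_sup (hx : x ∈ A.blk i) (hy : y ∈ A.blk i) :
    A.inf i x (A.sup i x y) = x :=
  A.le_antisymm' i _ _ (A.inf_le_left i x _ hx (A.sup_mem i x y hx hy))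
    (A.le_inf i x _ x hx (A.sup_mem i x y hx hy) hx (A.le_refl i x hx)
      (A.le_sup_left i x y hx hy))

lemma absorb_sup_inf (hx : x ∈ A.blk i) (hy : y ∈ A.blk i) :
    A.sup i x (A.inf i x y) = x :=
  A.le_antisymm' i _ _
    (A.sup_le i x _ x hx (A.inf_mem i x y hx hy) hx (A.le_refl i x hx)
      (A.inf_le_left i x y hx hy))
    (A.le_sup_left i x _ hx (A.inf_mem i x y hx hy))

lemma sup_assoc (hx : x ∈ A.blk i) (hy : y ∈ A.blk i) (hz : z ∈ A.blk i) :
    A.sup i (A.sup i x y) z = A.sup i x (A.sup i y z) := by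
  have hxy := A.sup_mem i x y hx hy
  have hyz := A.sup_mem i y z hy hz
  have h1 := A.sup_mem i _ _ hxy hz
  have h2 := A.sup_mem i _ _ hx hyz
  apply A.le_antisymm' i
  · refine A.sup_le i _ _ _ hxy hz h2 ?_ ?_
    · refine A.sup_le i _ _ _ hx hy h2 (A.le_sup_left i x _ hx hyz) ?_
      exact A.le_trans' i _ _ _ (A.le_sup_left i y z hy hz) (A.le_sup_right i x _ hx hyz)
    · exact A.le_trans' i _ _ _ (A.le_sup_right i y z hy hz) (A.le_sup_right i x _ hx hyz)
  · refine A.sup_le i _ _ _ hx hyz h1 ?_ ?_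
    · exact A.le_trans' i _ _ _ (A.le_sup_left i x y hx hy) (A.le_sup_left i _ z hxy hz)
    · refine A.sup_le i _ _ _ hy hz h1 ?_ (A.le_sup_right i _ z hxy hz)
      exact A.le_trans' i _ _ _ (A.le_sup_right i x y hx hy) (A.le_sup_left i _ z hxy hz)

lemma dual_distrib (hx : x ∈ A.blk i) (hy : y ∈ A.blk i) (hz : z ∈ A.blk i) :
    A.sup i x (A.inf i y z) = A.inf i (A.sup i x y) (A.sup i x z) := by
  have hxy := A.sup_mem i x y hx hy
  have h1 : A.inf i (A.sup i x y) (A.sup i x z) =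
      A.sup i (A.inf i (A.sup i x y) x) (A.inf i (A.sup i x y) z) :=
    A.distrib i _ x z hxy hx hz
  rw [A.inf_comm hxy hx, A.absorb_inf_sup hx hy] at h1
  rw [h1, A.inf_comm hxy hz, A.distrib i z x y hz hx hy]
  rw [← A.sup_assoc hx (A.inf_mem i z x hz hx) (A.inf_mem i z y hz hy)]
  rw [A.inf_comm hz hx, A.absorb_sup_inf hx hz, A.inf_comm hz hy]

lemma de_morgan_inf (hx : x ∈ A.blk i) (hy : y ∈ A.blk i) :
    A.compl (A.inf i x y) = A.sup i (A.compl x) (A.compl y) := by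
  have hx' := A.compl_mem i x hx
  have hy' := A.compl_mem i y hy
  have hxy := A.inf_mem i x y hx hy
  have hs := A.sup_mem i _ _ hx' hy'
  apply A.le_antisymm' i
  · -- compl (inf x y) ≤ sup x' y'
    have h1 : A.le i (A.compl (A.sup i (A.compl x) (A.compl y))) x := by
      have := A.compl_antitone i _ _ hx' hs (A.le_sup_left i _ _ hx' hy')
      rwa [A.compl_invol] at this
    have h2 : A.le i (A.compl (A.sup i (A.compl x) (A.compl y))) y := by
      have := A.compl_antitone i _ _ hy' hs (A.le_sup_right i _ _ hx' hy')
      rwa [A.compl_invol] at this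
    have h3 := A.le_inf i x y _ hx hy (A.compl_mem i _ hs) h1 h2
    have h4 := A.compl_antitone i _ _ (A.compl_mem i _ hs) hxy h3
    rwa [A.compl_invol] at h4
  · refine A.sup_le i _ _ _ hx' hy' (A.compl_mem i _ hxy) ?_ ?_
    · exact A.compl_antitone i _ _ hxy hx (A.inf_le_left i x y hx hy)
    · exact A.compl_antitone i _ _ hxy hy (A.inf_le_right i x y hx hy)

lemma de_morgan_sup (hx : x ∈ A.blk i) (hy : y ∈ A.blk i) :
    A.compl (A.sup i x y) = A.inf i (A.compl x) (A.compl y) := by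
  have hx' := A.compl_mem i x hx
  have hy' := A.compl_mem i y hy
  have := A.de_morgan_inf hx' hy'
  rw [A.compl_invol, A.compl_invol] at this
  have h2 := congrArg A.compl this
  rw [A.compl_invol] at h2
  exact h2.symm

end InBlock

end PastedFamily


namespace PastedFamily

variable {K ι : Type*} (A : PastedFamily K ι)

/-- `x` is an atom of block `i`. -/
def IsAt (i : ι) (x : K) : Prop :=
  x ∈ A.blk i ∧ x ≠ A.bot ∧ ∀ z ∈ A.blk i, A.le i z x → z = A.bot ∨ z = x

/-- `x` is a coatom of block `i`. -/
def IsCo (i : ι) (x : K) : Prop :=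
  x ∈ A.blk i ∧ x ≠ A.top ∧ ∀ z ∈ A.blk i, A.le i x z → z = A.top ∨ z = x

lemma IsAt.ne_top {i : ι} {x : K} (h : A.IsAt i x) : x ≠ A.top := by
  intro heq
  refine A.blk_not_small i {A.bot, A.top} (Set.toFinite _) (by
    have := Set.ncard_insert_le A.bot ({A.top} : Set K)
    simp at this ⊢; omega) ?_
  intro z hz
  rcases h.2.2 z hz (heq ▸ A.le_top i z hz) with h1 | h1 <;> simp [h1, heq]

lemma IsCo.ne_bot {i : ι} {x : K} (h : A.IsCo i x) : x ≠ A.bot := by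
  intro heq
  refine A.blk_not_small i {A.bot, A.top} (Set.toFinite _) (by
    have := Set.ncard_insert_le A.bot ({A.top} : Set K)
    simp at this ⊢; omega) ?_
  intro z hz
  rcases h.2.2 z hz (heq ▸ A.bot_le i z hz) with h1 | h1 <;> simp [h1, heq]

lemma sup_atoms_ne_top {i : ι} {u v : K} (hu : A.IsAt i u) (hv : A.IsAt i v)
    (huv : u ≠ v) : A.sup i u v ≠ A.top := by
  intro h
  refine A.blk_not_small i {A.bot, u, v, A.top} (Set.toFinite _)
    (le_trans (ncard_le_four _ _ _ _) (by norm_num)) ?_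
  intro z hz
  have hzu := A.inf_mem i z u hz hu.1
  have hzv := A.inf_mem i z v hz hv.1
  have hrw : z = A.sup i (A.inf i z u) (A.inf i z v) := by
    have h1 : z = A.inf i z (A.sup i u v) := by
      rw [h]; exact (A.inf_top_right hz).symm
    conv_lhs => rw [h1]
    exact A.distrib i z u v hz hu.1 hv.1
  rcases hu.2.2 _ hzu (A.inf_le_right i z u hz hu.1) with h2 | h2 <;>
    rcases hv.2.2 _ hzv (A.inf_le_right i z v hz hv.1) with h3 | h3 <;>
      rw [h2, h3] at hrw
  · rw [A.sup_bot_left (A.bot_mem i)] at hrw; simp [hrw]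
  · rw [A.sup_bot_left hv.1] at hrw; simp [hrw]
  · rw [A.sup_bot_right hu.1] at hrw; simp [hrw]
  · rw [h] at hrw; simp [hrw]

lemma inf_coatoms_ne_bot {i : ι} {u v : K} (hu : A.IsCo i u) (hv : A.IsCo i v)
    (huv : u ≠ v) : A.inf i u v ≠ A.bot := by
  intro h
  refine A.blk_not_small i {A.bot, u, v, A.top} (Set.toFinite _)
    (le_trans (ncard_le_four _ _ _ _) (by norm_num)) ?_
  intro z hz
  have hzu := A.sup_mem i z u hz hu.1
  have hzv := A.sup_mem i z v hz hv.1
  have hrw : z = A.inf i (A.sup i z u) (A.sup i z v) := by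
    have h1 : z = A.sup i z (A.inf i u v) := by
      rw [h]; exact (A.sup_bot_right hz).symm
    conv_lhs => rw [h1]
    exact A.dual_distrib hz hu.1 hv.1
  rcases hu.2.2 _ hzu (A.le_sup_right i z u hz hu.1) with h2 | h2 <;>
    rcases hv.2.2 _ hzv (A.le_sup_right i z v hz hv.1) with h3 | h3 <;>
      rw [h2, h3] at hrw
  · rw [A.inf_top_left (A.top_mem i)] at hrw; simp [hrw]
  · rw [A.inf_top_left hv.1] at hrw; simp [hrw]
  · rw [A.inf_top_right hu.1] at hrw; simp [hrw]
  · rw [h] at hrw; simp [hrw]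

lemma not_isAt_isCo {i : ι} {x : K} (ha : A.IsAt i x) (hc : A.IsCo i x) : False := by
  classical
  by_cases h0 : A.blk i ⊆ {A.bot, x, A.top}
  · exact A.blk_not_small i _ (Set.toFinite _) (by
      have h1 : ({A.bot, x, A.top} : Set K).ncard ≤ 4 := by
        have := ncard_le_four A.bot A.bot x A.top
        have h2 : ({A.bot, A.bot, x, A.top} : Set K) = {A.bot, x, A.top} := by
          simp
        rwa [h2] at this
      omega) h0
  · obtain ⟨u, hu, hu3⟩ := Set.not_subset.mp h0
    simp only [Set.mem_insert_iff, Set.mem_singleton_iff, not_or] at hu3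
    obtain ⟨hub, hux, hut⟩ := hu3
    -- every element of blk i is in {bot, x, top, u}
    have key : ∀ v ∈ A.blk i, v ≠ A.bot → v ≠ x → v ≠ A.top → ∀ w ∈ A.blk i,
        w ≠ A.bot → w ≠ x → w ≠ A.top → A.le i v w := by
      intro v hv hvb hvx hvt w hw hwb hwx hwt
      have hvx0 : A.inf i v x = A.bot := by
        rcases ha.2.2 _ (A.inf_mem i v x hv ha.1) (A.inf_le_right i v x hv ha.1) with h1 | h1
        · exact h1
        · exfalso
          have h2 : A.le i x v := h1 ▸ A.inf_le_left i v x hv ha.1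
          rcases hc.2.2 v hv h2 with h3 | h3 <;> [exact hvt h3; exact hvx h3]
      have hxw1 : A.sup i x w = A.top := by
        rcases hc.2.2 _ (A.sup_mem i x w ha.1 hw) (A.le_sup_left i x w ha.1 hw) with h1 | h1
        · exact h1
        · exfalso
          have h2 : A.le i w x := h1 ▸ A.le_sup_right i x w ha.1 hw
          rcases ha.2.2 w hw h2 with h3 | h3 <;> [exact hwb h3; exact hwx h3]
      have : v = A.inf i v w := by
        have h1 : v = A.inf i v (A.sup i x w) := by
          rw [hxw1]; exact (A.inf_top_right hv).symm
        conv_lhs => rw [h1]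
        rw [A.distrib i v x w hv ha.1 hw, hvx0, A.sup_bot_left (A.inf_mem i v w hv hw)]
      exact this ▸ A.inf_le_right i v w hv hw
    refine A.blk_not_small i {A.bot, x, A.top, u} (Set.toFinite _)
      (le_trans (ncard_le_four _ _ _ _) (by norm_num)) ?_
    intro v hv
    simp only [Set.mem_insert_iff, Set.mem_singleton_iff]
    by_cases hvb : v = A.bot; · tauto
    by_cases hvx : v = x; · tauto
    by_cases hvt : v = A.top; · tauto
    have h1 := key v hv hvb hvx hvt u hu hub hux hut
    have h2 := key u hu hub hux hut v hv hvb hvx hvt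
    exact Or.inr (Or.inr (Or.inr (A.le_antisymm' i v u h1 h2)))

end PastedFamily


namespace PastedFamily

variable {K ι : Type*} (A : PastedFamily K ι)

lemma atom_le_compl {i : ι} {p z : K} (hp : A.IsAt i p) (hz : z ∈ A.blk i)
    (h0 : A.inf i p z = A.bot) : A.le i p (A.compl z) := by
  have hpm := hp.1
  have hp' := A.compl_mem i p hpm
  have hz' := A.compl_mem i z hz
  have hzz' := A.sup_mem i z _ hz hz'
  -- key : p ≤ z ∨ z'  whenever p ≤ sup z z'
  have key : A.le i p (A.sup i z (A.compl z)) → A.le i p (A.compl z) := by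
    intro hle
    have h1 : p = A.inf i p (A.sup i z (A.compl z)) :=
      A.le_antisymm' i _ _
        (A.le_inf i p _ p hpm hzz' hpm (A.le_refl i p hpm) hle)
        (A.inf_le_left i p _ hpm hzz')
    have h2 : p = A.inf i p (A.compl z) := by
      conv_lhs => rw [h1]
      rw [A.distrib i p z _ hpm hz hz', h0, A.sup_bot_left (A.inf_mem i p _ hpm hz')]
    exact h2 ▸ A.inf_le_right i p _ hpm hz'
  rcases hp.2.2 _ (A.inf_mem i p _ hpm hp') (A.inf_le_left i p _ hpm hp') with hpp | hpp
  · -- p ∧ p' = bot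
    set m := A.inf i z (A.compl z) with hm
    have hmm : m ∈ A.blk i := A.inf_mem i z _ hz hz'
    have hreg : A.le i m (A.sup i p (A.compl p)) := A.regular i z p hz hpm
    have hmp : A.inf i m p = A.bot := by
      have h1 : A.le i (A.inf i m p) (A.inf i p z) := by
        refine A.le_inf i p z _ hpm hz (A.inf_mem i m p hmm hpm)
          (A.inf_le_right i m p hmm hpm) ?_
        exact A.le_trans' i _ _ _ (A.inf_le_left i m p hmm hpm)
          (A.inf_le_left i z _ hz hz')
      rw [h0] at h1
      exact A.eq_bot_of_le_bot (A.inf_mem i m p hmm hpm) h1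
    have h2 : m = A.inf i m (A.sup i p (A.compl p)) :=
      A.le_antisymm' i _ _
        (A.le_inf i m _ m hmm (A.sup_mem i p _ hpm hp') hmm (A.le_refl i m hmm) hreg)
        (A.inf_le_left i m _ hmm (A.sup_mem i p _ hpm hp'))
    have h3 : m = A.inf i m (A.compl p) := by
      conv_lhs => rw [h2]
      rw [A.distrib i m p _ hmm hpm hp', hmp, A.sup_bot_left (A.inf_mem i m _ hmm hp')]
    have h4 : A.le i m (A.compl p) := h3 ▸ A.inf_le_right i m _ hmm hp'
    have h5 := A.compl_antitone i m _ hmm hp' h4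
    rw [A.compl_invol] at h5
    -- p ≤ compl m = sup z' z'' = sup z' z ... use de morgan
    have h6 : A.compl m = A.sup i (A.compl z) z := by
      rw [hm, A.de_morgan_inf hz hz', A.compl_invol]
    rw [h6] at h5
    rw [A.sup_comm hz' hz] at h5
    exact key h5
  · -- p ≤ p' : use regularity p∧p' ≤ z∨z'
    have hreg : A.le i (A.inf i p (A.compl p)) (A.sup i z (A.compl z)) :=
      A.regular i p z hpm hz
    rw [hpp] at hreg
    exact key hreg

lemma atom_dichotomy {i : ι} {p z : K} (hp : A.IsAt i p) (hz : z ∈ A.blk i) :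
    A.le i p z ∨ A.le i p (A.compl z) := by
  rcases hp.2.2 _ (A.inf_mem i p z hp.1 hz) (A.inf_le_left i p z hp.1 hz) with h | h
  · exact Or.inr (A.atom_le_compl hp hz h)
  · exact Or.inl (h ▸ A.inf_le_right i p z hp.1 hz)

lemma co_compl_le {i : ι} {c z : K} (hc : A.IsCo i c) (hz : z ∈ A.blk i)
    (h1 : A.sup i c z = A.top) : A.le i (A.compl c) z := by
  have hcm := hc.1
  have hc' := A.compl_mem i c hcm
  have hz' := A.compl_mem i z hz
  have hzz' := A.inf_mem i z _ hz hz'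
  have key : A.le i (A.inf i z (A.compl z)) c → A.le i (A.compl c) z := by
    intro hle
    have h2 : c = A.sup i c (A.inf i z (A.compl z)) :=
      A.le_antisymm' i _ _ (A.le_sup_left i c _ hcm hzz')
        (A.sup_le i c _ c hcm hzz' hcm (A.le_refl i c hcm) hle)
    have h3 : c = A.sup i c (A.compl z) := by
      conv_lhs => rw [h2]
      rw [A.dual_distrib hcm hz hz', h1, A.inf_top_left (A.sup_mem i c _ hcm hz')]
    have h4 : A.le i (A.compl z) c := h3 ▸ A.le_sup_right i c _ hcm hz'
    have h5 := A.compl_antitone i _ _ hz' hcm h4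
    rwa [A.compl_invol] at h5
  rcases hc.2.2 _ (A.sup_mem i c _ hcm hc') (A.le_sup_left i c _ hcm hc') with hcc | hcc
  · -- c ∨ c' = top
    set M := A.sup i z (A.compl z) with hM
    have hMm : M ∈ A.blk i := A.sup_mem i z _ hz hz'
    have hreg : A.le i (A.inf i c (A.compl c)) M := A.regular i c z hcm hz
    have hMc : A.sup i M c = A.top := by
      have h2 : A.le i (A.sup i c z) (A.sup i M c) := by
        refine A.sup_le i c z _ hcm hz (A.sup_mem i M c hMm hcm)
          (A.le_sup_right i M c hMm hcm) ?_
        exact A.le_trans' i _ _ _ (A.le_sup_left i z _ hz hz') (A.le_sup_left i M c hMm hcm)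
      rw [h1] at h2
      exact A.eq_top_of_top_le (A.sup_mem i M c hMm hcm) h2
    have h2 : M = A.sup i M (A.inf i c (A.compl c)) :=
      A.le_antisymm' i _ _ (A.le_sup_left i M _ hMm (A.inf_mem i c _ hcm hc'))
        (A.sup_le i M _ M hMm (A.inf_mem i c _ hcm hc') hMm (A.le_refl i M hMm) hreg)
    have h3 : M = A.sup i M (A.compl c) := by
      conv_lhs => rw [h2]
      rw [A.dual_distrib hMm hcm hc', hMc, A.inf_top_left (A.sup_mem i M _ hMm hc')]
    have h4 : A.le i (A.compl c) M := h3 ▸ A.le_sup_right i M _ hMm hc'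
    -- c' ≤ M = z ∨ z'; also inf c' z' = compl (sup c z) = bot
    have h5 : A.inf i (A.compl c) (A.compl z) = A.bot := by
      have := A.de_morgan_sup hcm hz
      rw [h1, A.compl_top] at this
      exact this.symm
    have h6 : A.compl c = A.inf i (A.compl c) M :=
      A.le_antisymm' i _ _
        (A.le_inf i _ M _ hc' hMm hc' (A.le_refl i _ hc') h4)
        (A.inf_le_left i _ M hc' hMm)
    have h7 : A.compl c = A.inf i (A.compl c) z := by
      conv_lhs => rw [h6]
      rw [hM, A.distrib i _ z _ hc' hz hz', h5,
        A.sup_bot_right (A.inf_mem i _ z hc' hz)]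
    exact h7 ▸ A.inf_le_right i _ z hc' hz
  · -- c' ≤ c
    have hreg : A.le i (A.inf i z (A.compl z)) (A.sup i c (A.compl c)) :=
      A.regular i z c hz hcm
    rw [hcc] at hreg
    exact key hreg

lemma co_dichotomy {i : ι} {c z : K} (hc : A.IsCo i c) (hz : z ∈ A.blk i) :
    A.le i z c ∨ A.le i (A.compl c) z := by
  rcases hc.2.2 _ (A.sup_mem i c z hc.1 hz) (A.le_sup_left i c z hc.1 hz) with h | h
  · exact Or.inr (A.co_compl_le hc hz h)
  · exact Or.inl (h ▸ A.le_sup_right i c z hc.1 hz)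

end PastedFamily


namespace PastedFamily

variable {K ι : Type*} (A : PastedFamily K ι)

lemma shared_type {i j : ι} {x : K} (hij : i ≠ j) (hxi : x ∈ A.blk i)
    (hxj : x ∈ A.blk j) (hb : x ≠ A.bot) (ht : x ≠ A.top) :
    (A.IsAt i x ∧ A.IsAt j x) ∨ (A.IsCo i x ∧ A.IsCo j x) := by
  rcases A.inter i j hij with h | ⟨_, _, _, _, _, hat⟩
  · exfalso
    have : x ∈ A.blk i ∩ A.blk j := ⟨hxi, hxj⟩
    rw [h] at this
    rcases this with h1 | h1 <;> [exact hb h1; exact ht h1]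
  · rcases hat x ⟨hxi, hxj⟩ hb ht with ⟨⟨_, h1⟩, ⟨_, h2⟩⟩ | ⟨⟨_, h1⟩, ⟨_, h2⟩⟩
    · exact Or.inl ⟨⟨hxi, hb, h1⟩, hxj, hb, h2⟩
    · exact Or.inr ⟨⟨hxi, ht, h1⟩, hxj, ht, h2⟩

lemma IsAt.propagate {i j : ι} {x : K} (h : A.IsAt i x) (hxj : x ∈ A.blk j) :
    A.IsAt j x := by
  by_cases hij : i = j
  · exact hij ▸ h
  · rcases A.shared_type hij h.1 hxj h.2.1 (h.ne_top A) with h1 | h1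
    · exact h1.2
    · exact absurd h1.1 (fun hc => A.not_isAt_isCo h hc)

lemma IsCo.propagate {i j : ι} {x : K} (h : A.IsCo i x) (hxj : x ∈ A.blk j) :
    A.IsCo j x := by
  by_cases hij : i = j
  · exact hij ▸ h
  · rcases A.shared_type hij h.1 hxj (h.ne_bot A) h.2.1 with h1 | h1
    · exact absurd h1.1 (fun hc => A.not_isAt_isCo hc h)
    · exact h1.2

lemma gle_atom {i : ι} {a z : K} (ha : A.IsAt i a) (h : A.gle z a) :
    z = A.bot ∨ z = a := by
  obtain ⟨t, hzt, hat, hle⟩ := h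
  exact (ha.propagate A hat).2.2 z hzt hle

lemma gle_co {i : ι} {c z : K} (hc : A.IsCo i c) (h : A.gle c z) :
    z = A.top ∨ z = c := by
  obtain ⟨t, hct, hzt, hle⟩ := h
  exact (hc.propagate A hct).2.2 z hzt hle

lemma isAt_compl_ne {i : ι} {x : K} (h : A.IsAt i x) : A.compl x ≠ x := by
  intro hfix
  refine A.blk_not_small i {A.bot, x, A.top} (Set.toFinite _)
    (by
      have h1 : ({A.bot, x, A.top} : Set K) ⊆ {A.bot, A.bot, x, A.top} := by
        intro w hw; simp at hw ⊢; tauto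
      exact le_trans (le_trans (Set.ncard_le_ncard h1 (Set.toFinite _))
        (ncard_le_four _ _ _ _)) (by norm_num)) ?_
  intro z hz
  simp only [Set.mem_insert_iff, Set.mem_singleton_iff]
  rcases A.atom_dichotomy h hz with h1 | h1
  · -- x ≤ z  hence  z' ≤ x' = x
    have h2 := A.compl_antitone i x z h.1 hz h1
    rw [hfix] at h2
    rcases h.2.2 _ (A.compl_mem i z hz) h2 with h3 | h3
    · right; right
      have := congrArg A.compl h3
      rwa [A.compl_invol, A.compl_bot] at this
    · right; left
      have := congrArg A.compl h3
      rwa [A.compl_invol, hfix] at this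
  · -- x ≤ z'  hence  z = z'' ≤ x' = x
    have h2 := A.compl_antitone i x _ h.1 (A.compl_mem i z hz) h1
    rw [hfix, A.compl_invol] at h2
    rcases h.2.2 z hz h2 with h3 | h3 <;> tauto

lemma isCo_compl_ne {i : ι} {x : K} (h : A.IsCo i x) : A.compl x ≠ x := by
  intro hfix
  refine A.blk_not_small i {A.bot, x, A.top} (Set.toFinite _)
    (by
      have h1 : ({A.bot, x, A.top} : Set K) ⊆ {A.bot, A.bot, x, A.top} := by
        intro w hw; simp at hw ⊢; tauto
      exact le_trans (le_trans (Set.ncard_le_ncard h1 (Set.toFinite _))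
        (ncard_le_four _ _ _ _)) (by norm_num)) ?_
  intro z hz
  simp only [Set.mem_insert_iff, Set.mem_singleton_iff]
  rcases A.co_dichotomy h hz with h1 | h1
  · -- z ≤ x hence x = x' ≤ z'
    have h2 := A.compl_antitone i z x hz h.1 h1
    rw [hfix] at h2
    rcases h.2.2 _ (A.compl_mem i z hz) h2 with h3 | h3
    · left
      have := congrArg A.compl h3
      rwa [A.compl_invol, A.compl_top] at this
    · right; left
      have := congrArg A.compl h3
      rwa [A.compl_invol, hfix] at this
  · -- x = x' ≤ z
    rw [hfix] at h1
    rcases h.2.2 z hz h1 with h3 | h3 <;> tauto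

lemma inter_ne_triv {i j : ι} {x : K} (hx : x ∈ A.blk i ∩ A.blk j)
    (hb : x ≠ A.bot) (ht : x ≠ A.top) : A.blk i ∩ A.blk j ≠ {A.bot, A.top} := by
  intro h
  rw [h] at hx
  rcases hx with h1 | h1 <;> [exact hb h1; exact ht h1]

lemma inter_struct {i j : ι} (hij : i ≠ j)
    (hne : A.blk i ∩ A.blk j ≠ {A.bot, A.top}) :
    ∃ a, A.blk i ∩ A.blk j = {A.bot, A.top, a, A.compl a} ∧
      A.IsAt i a ∧ A.IsAt j a ∧ A.IsCo i (A.compl a) ∧ A.IsCo j (A.compl a) ∧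
      a ≠ A.bot ∧ a ≠ A.top ∧ A.compl a ≠ A.bot ∧ A.compl a ≠ A.top ∧
      A.compl a ≠ a := by
  rcases A.inter i j hij with h | ⟨hcard, hbm, htm, hcm, hops, _⟩
  · exact absurd h hne
  -- find a nontrivial element
  have hsub : ¬(A.blk i ∩ A.blk j ⊆ {A.bot, A.top}) := by
    intro hs
    refine hne (Set.Subset.antisymm hs ?_)
    intro w hw
    simp only [Set.mem_insert_iff, Set.mem_singleton_iff] at hw
    rcases hw with h1 | h1
    · exact h1 ▸ hbm
    · exact h1 ▸ htm
  obtain ⟨s, hs, hsnt⟩ := Set.not_subset.mp hsub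
  simp only [Set.mem_insert_iff, Set.mem_singleton_iff, not_or] at hsnt
  obtain ⟨hsb, hst⟩ := hsnt
  have hs' : A.compl s ∈ A.blk i ∩ A.blk j := hcm s hs
  have hs'b : A.compl s ≠ A.bot := by
    intro h1
    have := congrArg A.compl h1
    rw [A.compl_invol, A.compl_bot] at this
    exact hst this
  have hs't : A.compl s ≠ A.top := by
    intro h1
    have := congrArg A.compl h1
    rw [A.compl_invol, A.compl_top] at this
    exact hsb this
  have htype := A.shared_type hij hs.1 hs.2 hsb hst
  have htype' := A.shared_type hij hs'.1 hs'.2 hs'b hs't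
  have hfix : A.compl s ≠ s := by
    rcases htype with h1 | h1
    · exact A.isAt_compl_ne h1.1
    · exact A.isCo_compl_ne h1.1
  -- S = {bot, top, s, compl s}
  have hSfin : (A.blk i ∩ A.blk j).Finite :=
    Set.Finite.subset (A.finite i) Set.inter_subset_left
  have hSeq : ({A.bot, A.top, s, A.compl s} : Set K) = A.blk i ∩ A.blk j := by
    refine Set.eq_of_subset_of_ncard_le ?_ ?_ hSfin
    · intro w hw
      rcases hw with h1 | h1 | h1 | h1 <;> (try simp only [Set.mem_singleton_iff] at *)
      · exact h1 ▸ hbm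
      · exact h1 ▸ htm
      · exact h1 ▸ hs
      · exact h1 ▸ hs'
    · refine le_trans hcard ?_
      have h4 : ({A.bot, A.top, s, A.compl s} : Set K).ncard = 4 := by
        rw [Set.ncard_insert_of_notMem (by simp [A.bot_ne_top, Ne.symm hsb, Ne.symm hs'b])
            (Set.toFinite _),
          Set.ncard_insert_of_notMem (by simp [Ne.symm hst, Ne.symm hs't]) (Set.toFinite _),
          Set.ncard_insert_of_notMem (by
            simp only [Set.mem_singleton_iff]
            exact fun h => hfix h.symm) (Set.toFinite _),
          Set.ncard_singleton]
      omega
  -- rule out both atoms / both coatoms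
  have hnotboth_at : ¬(A.IsAt i s ∧ A.IsAt i (A.compl s)) := by
    rintro ⟨h1, h2⟩
    have hsup : A.sup i s (A.compl s) ∈ A.blk i ∩ A.blk j :=
      (hops s (A.compl s) hs hs').2.2.2
    rw [← hSeq] at hsup
    rcases hsup with h3 | h3 | h3 | h3 <;> (try simp only [Set.mem_singleton_iff] at *)
    · exact hsb (A.eq_bot_of_le_bot h1.1 (h3 ▸ A.le_sup_left i s _ h1.1 h2.1))
    · exact A.sup_atoms_ne_top h1 h2 (fun h => hfix h.symm) h3
    · have h4 := h3 ▸ A.le_sup_right i s _ h1.1 h2.1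
      rcases h1.2.2 _ h2.1 h4 with h5 | h5 <;> [exact hs'b h5; exact hfix h5]
    · have h4 := h3 ▸ A.le_sup_left i s _ h1.1 h2.1
      rcases h2.2.2 _ h1.1 h4 with h5 | h5 <;> [exact hsb h5; exact hfix h5.symm]
  have hnotboth_co : ¬(A.IsCo i s ∧ A.IsCo i (A.compl s)) := by
    rintro ⟨h1, h2⟩
    have hinf : A.inf i s (A.compl s) ∈ A.blk i ∩ A.blk j :=
      (hops s (A.compl s) hs hs').2.1
    rw [← hSeq] at hinf
    rcases hinf with h3 | h3 | h3 | h3 <;> (try simp only [Set.mem_singleton_iff] at *)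
    · exact A.inf_coatoms_ne_bot h1 h2 (fun h => hfix h.symm) h3
    · exact hst (A.eq_top_of_top_le h1.1 (h3 ▸ A.inf_le_left i s _ h1.1 h2.1))
    · have h4 := A.inf_le_right i s (A.compl s) h1.1 h2.1
      rw [h3] at h4
      rcases h1.2.2 _ h2.1 h4 with h5 | h5 <;> [exact hs't h5; exact hfix h5]
    · have h4 := A.inf_le_left i s (A.compl s) h1.1 h2.1
      rw [h3] at h4
      rcases h2.2.2 s h1.1 h4 with h5 | h5 <;> [exact hst h5; exact hfix h5.symm]
  rcases htype with hA | hC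
  · rcases htype' with hA' | hC'
    · exact absurd ⟨hA.1, hA'.1⟩ hnotboth_at
    · exact ⟨s, hSeq.symm, hA.1, hA.2, hC'.1, hC'.2, hsb, hst, hs'b, hs't, hfix⟩
  · rcases htype' with hA' | hC'
    · refine ⟨A.compl s, ?_, hA'.1, hA'.2, ?_, ?_, hs'b, hs't, ?_, ?_, ?_⟩
      · rw [← hSeq, A.compl_invol]
        ext w; simp only [Set.mem_insert_iff, Set.mem_singleton_iff]; tauto
      · rw [A.compl_invol]; exact hC.1
      · rw [A.compl_invol]; exact hC.2
      · rw [A.compl_invol]; exact hsb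
      · rw [A.compl_invol]; exact hst
      · rw [A.compl_invol]; exact fun h => hfix h.symm
    · exact absurd ⟨hC.1, hC'.1⟩ hnotboth_co

lemma inter_ncard4 {i j : ι} (hij : i ≠ j)
    (hne : A.blk i ∩ A.blk j ≠ {A.bot, A.top}) :
    (A.blk i ∩ A.blk j).ncard = 4 := by
  obtain ⟨a, hS, _, _, _, _, hb, ht, hb', ht', hfix⟩ := A.inter_struct hij hne
  rw [hS]
  rw [Set.ncard_insert_of_notMem (by simp [A.bot_ne_top, Ne.symm hb, Ne.symm hb'])
      (Set.toFinite _),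
    Set.ncard_insert_of_notMem (by simp [Ne.symm ht, Ne.symm ht']) (Set.toFinite _),
    Set.ncard_insert_of_notMem (by
      simp only [Set.mem_singleton_iff]
      exact fun h => hfix h.symm) (Set.toFinite _),
    Set.ncard_singleton]

end PastedFamily


namespace PastedFamily

variable {K ι : Type*} (A : PastedFamily K ι)

lemma atom_le_compl_of_atom {i : ι} {a c : K} (ha : A.IsAt i a) (hc : A.IsAt i c)
    (hne : a ≠ c) : A.le i a (A.compl c) := by
  rcases A.atom_dichotomy ha hc.1 with h | h
  · rcases hc.2.2 a ha.1 h with h1 | h1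
    · exact absurd h1 ha.2.1
    · exact absurd h1 hne
  · exact h

lemma ne_of_ncard4 {i j : ι} (h : (A.blk i ∩ A.blk j).ncard = 4) : i ≠ j := by
  intro e
  subst e
  rw [Set.inter_self] at h
  have := A.card6 i
  omega

lemma inter_ne_triv_of_ncard4 {i j : ι} (h : (A.blk i ∩ A.blk j).ncard = 4) :
    A.blk i ∩ A.blk j ≠ {A.bot, A.top} := by
  intro e
  rw [e, Set.ncard_pair (A.bot_ne_top)] at h
  omega

lemma not_mem_of_triple {i j k : ι} {x : K}
    (hT : A.blk i ∩ A.blk j ∩ A.blk k = {A.bot, A.top})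
    (hxi : x ∈ A.blk i) (hxj : x ∈ A.blk j) (hb : x ≠ A.bot) (ht : x ≠ A.top) :
    x ∉ A.blk k := by
  intro hxk
  have : x ∈ A.blk i ∩ A.blk j ∩ A.blk k := ⟨⟨hxi, hxj⟩, hxk⟩
  rw [hT] at this
  rcases this with h1 | h1 <;> [exact hb h1; exact ht h1]

lemma noLoop3 (hsup : ∀ x y : K, ∃ s, A.IsLubA x y s) :
    ¬ ∃ i j k : ι, A.AtomicLoop3 i j k := by
  rintro ⟨i, j, k, hij4, hjk4, hki4, hT⟩
  have hij := A.ne_of_ncard4 hij4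
  have hjk := A.ne_of_ncard4 hjk4
  have hki := A.ne_of_ncard4 hki4
  obtain ⟨a, hSij, hAia, hAja, hCia', hCja', hab0, hat0, ha'b0, ha't0, hafix⟩ :=
    A.inter_struct hij (A.inter_ne_triv_of_ncard4 hij4)
  obtain ⟨b, hSjk, hAjb, hAkb, hCjb', hCkb', hbb0, hbt0, hb'b0, hb't0, hbfix⟩ :=
    A.inter_struct hjk (A.inter_ne_triv_of_ncard4 hjk4)
  obtain ⟨c, hSki, hAkc, hAic, hCkc', hCic', hcb0, hct0, hc'b0, hc't0, hcfix⟩ :=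
    A.inter_struct hki (A.inter_ne_triv_of_ncard4 hki4)
  have hai : a ∈ A.blk i := hAia.1
  have haj : a ∈ A.blk j := hAja.1
  have hbj : b ∈ A.blk j := hAjb.1
  have hbk : b ∈ A.blk k := hAkb.1
  have hck : c ∈ A.blk k := hAkc.1
  have hci : c ∈ A.blk i := hAic.1
  have hc'k : A.compl c ∈ A.blk k := hCkc'.1
  have hc'i : A.compl c ∈ A.blk i := hCic'.1
  have hank : a ∉ A.blk k := A.not_mem_of_triple hT hai haj hab0 hat0
  have hbni : b ∉ A.blk i := fun h => A.not_mem_of_triple hT h hbj hbb0 hbt0 hbk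
  have hc'nj : A.compl c ∉ A.blk j := fun h =>
    A.not_mem_of_triple hT hc'i h hc'b0 hc't0 hc'k
  have hab : a ≠ b := fun e => hank (e ▸ hbk)
  have hac : a ≠ c := fun e => hank (e ▸ hck)
  have hbc : b ≠ c := fun e => hbni (e ▸ hci)
  -- the two upper bounds
  have halec' : A.le i a (A.compl c) := A.atom_le_compl_of_atom hAia hAic hac
  have hblec' : A.le k b (A.compl c) := A.atom_le_compl_of_atom hAkb hAkc hbc
  set d := A.sup j a b with hd
  have hdm : d ∈ A.blk j := A.sup_mem j a b haj hbj
  have hdt : d ≠ A.top := A.sup_atoms_ne_top hAja hAjb hab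
  have hdb : d ≠ A.bot := by
    intro e
    have h1 := A.le_sup_left j a b haj hbj
    rw [← hd, e] at h1
    exact hab0 (A.eq_bot_of_le_bot haj h1)
  have hda : d ≠ a := by
    intro e
    have h1 := A.le_sup_right j a b haj hbj
    rw [← hd, e] at h1
    rcases hAja.2.2 b hbj h1 with h2 | h2 <;> [exact hbb0 h2; exact hab h2.symm]
  obtain ⟨s, hsa, hsb, hlub⟩ := hsup a b
  have hsd : A.gle s d := hlub d ⟨j, haj, hdm, hd ▸ A.le_sup_left j a b haj hbj⟩
    ⟨j, hbj, hdm, hd ▸ A.le_sup_right j a b haj hbj⟩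
  have hsc' : A.gle s (A.compl c) :=
    hlub _ ⟨i, hai, hc'i, halec'⟩ ⟨k, hbk, hc'k, hblec'⟩
  have hst : s ≠ A.top := by
    intro e
    rw [e] at hsc'
    exact hc't0 (A.gle_eq_top hsc')
  have hsa' : s ≠ a := by
    intro e
    rw [e] at hsb
    rcases A.gle_atom hAia hsb with h1 | h1 <;> [exact hbb0 h1; exact hab h1.symm]
  by_cases hsj : s ∈ A.blk j
  · -- s = d, then d ≤ c' gives a contradiction
    obtain ⟨p, hap, hsp, hlep⟩ := hsa
    obtain ⟨q, hbq, hsq, hleq⟩ := hsb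
    have h1 : A.le j a s := A.le_compat p j a s hap hsp haj hsj hlep
    have h2 : A.le j b s := A.le_compat q j b s hbq hsq hbj hsj hleq
    have h3 : A.le j d s := A.sup_le j a b s haj hbj hsj h1 h2
    obtain ⟨r, hsr, hdr, hler⟩ := hsd
    have h4 : A.le j s d := A.le_compat r j s d hsr hdr hsj hdm hler
    have hsd' : s = d := A.le_antisymm' j s d h4 h3
    rw [hsd'] at hsc'
    obtain ⟨l, hdl, hc'l, hlel⟩ := hsc'
    have hlj : l ≠ j := fun e => hc'nj (e ▸ hc'l)
    rcases A.shared_type (Ne.symm hlj) hdm hdl hdb hdt with hA | hC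
    · rw [hsd'] at h1
      rcases hA.1.2.2 a haj h1 with h5 | h5
      · exact hab0 h5
      · exact hda h5.symm
    · rcases hC.2.2.2 _ hc'l hlel with h5 | h5
      · exact hc't0 h5
      · exact hc'nj (h5 ▸ hdm)
  · obtain ⟨p, hap, hsp, hlep⟩ := hsa
    obtain ⟨q, hbq, hsq, hleq⟩ := hsb
    have hpj : p ≠ j := fun e => hsj (e ▸ hsp)
    have hqj : q ≠ j := fun e => hsj (e ▸ hsq)
    by_cases hpq : p = q
    · subst hpq
      obtain ⟨e, hSe, hAje, hApe, hCje', hCpe', _, _, _, _, _⟩ :=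
        A.inter_struct (Ne.symm hpj) (A.inter_ne_triv ⟨haj, hap⟩ hab0 hat0)
      have hae : a = e := by
        have : a ∈ ({A.bot, A.top, e, A.compl e} : Set K) := hSe ▸ ⟨haj, hap⟩
        rcases this with h1 | h1 | h1 | h1 <;>
          (try simp only [Set.mem_singleton_iff] at *)
        · exact absurd h1 hab0
        · exact absurd h1 hat0
        · exact h1
        · exact absurd (h1 ▸ hCje') (fun hc => A.not_isAt_isCo hAja hc)
      have hbe : b = e := by
        have : b ∈ ({A.bot, A.top, e, A.compl e} : Set K) := hSe ▸ ⟨hbj, hbq⟩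
        rcases this with h1 | h1 | h1 | h1 <;>
          (try simp only [Set.mem_singleton_iff] at *)
        · exact absurd h1 hbb0
        · exact absurd h1 hbt0
        · exact h1
        · exact absurd (h1 ▸ hCje') (fun hc => A.not_isAt_isCo hAjb hc)
      exact hab (hae.trans hbe.symm)
    · have hsb0 : s ≠ A.bot := by
        intro e
        rw [e] at hlep
        exact hab0 (A.eq_bot_of_le_bot hap hlep)
      rcases A.shared_type hpq hsp hsq hsb0 hst with hA | hC
      · rcases hA.1.2.2 a hap hlep with h1 | h1
        · exact hab0 h1
        · exact hsa' h1.symm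
      · obtain ⟨r, hsr, hdr, hler⟩ := hsd
        have hCr : A.IsCo r s := (hC.1).propagate A hsr
        rcases hCr.2.2 d hdr hler with h1 | h1
        · exact hdt h1
        · exact hsj (h1 ▸ hdm)

end PastedFamily


namespace PastedFamily

variable {K ι : Type*} (A : PastedFamily K ι)

lemma not_mem_of_pair {i k : ι} {x : K} (h : A.blk i ∩ A.blk k = {A.bot, A.top})
    (hxi : x ∈ A.blk i) (hb : x ≠ A.bot) (ht : x ≠ A.top) : x ∉ A.blk k := by
  intro hxk
  have : x ∈ A.blk i ∩ A.blk k := ⟨hxi, hxk⟩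
  rw [h] at this
  rcases this with h1 | h1 <;> [exact hb h1; exact ht h1]

lemma ne_of_pair_triv {i k : ι} (h : A.blk i ∩ A.blk k = {A.bot, A.top}) : i ≠ k := by
  intro e
  subst e
  rw [Set.inter_self] at h
  have h2 := A.card6 i
  rw [h, Set.ncard_pair A.bot_ne_top] at h2
  omega

/-- If `x` is an atom of `i` lying in the (nontrivial) intersection of blocks
`i` and `j` whose canonical atom is `α`, then `x = α`. -/
lemma eq_atom_of_mem {i j : ι} {x α : K}
    (hS : A.blk i ∩ A.blk j = {A.bot, A.top, α, A.compl α})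
    (hx : x ∈ A.blk i ∩ A.blk j) (hA : A.IsAt i x) (hCα : A.IsCo i (A.compl α))
    (ht : x ≠ A.top) : x = α := by
  rw [hS] at hx
  simp only [Set.mem_insert_iff, Set.mem_singleton_iff] at hx
  rcases hx with h1 | h1 | h1 | h1
  · exact absurd h1 hA.2.1
  · exact absurd h1 ht
  · exact h1
  · exact absurd (h1 ▸ hCα) (fun hc => A.not_isAt_isCo hA hc)

lemma eq_coatom_of_mem {i j : ι} {x α : K}
    (hS : A.blk i ∩ A.blk j = {A.bot, A.top, α, A.compl α})
    (hx : x ∈ A.blk i ∩ A.blk j) (hC : A.IsCo i x) (hAα : A.IsAt i α)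
    (hb : x ≠ A.bot) : x = A.compl α := by
  rw [hS] at hx
  simp only [Set.mem_insert_iff, Set.mem_singleton_iff] at hx
  rcases hx with h1 | h1 | h1 | h1
  · exact absurd h1 hb
  · exact absurd h1 hC.2.1
  · exact absurd (h1 ▸ hAα) (fun ha => A.not_isAt_isCo ha hC)
  · exact h1

lemma noLoop4 (hsup : ∀ x y : K, ∃ s, A.IsLubA x y s)
    (hnl3 : ¬ ∃ i j k : ι, A.AtomicLoop3 i j k) :
    ¬ ∃ i j k l : ι, A.AtomicLoop4 i j k l := by
  rintro ⟨i, j, k, l, hij4, hjk4, hkl4, hli4, hik, hjl, hTijk, hTijl, hTikl, hTjkl⟩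
  have hij := A.ne_of_ncard4 hij4
  have hjk := A.ne_of_ncard4 hjk4
  have hkl := A.ne_of_ncard4 hkl4
  have hli := A.ne_of_ncard4 hli4
  obtain ⟨a, hSij, hAia, hAja, hCia', hCja', hab0, hat0, ha'b0, ha't0, hafix⟩ :=
    A.inter_struct hij (A.inter_ne_triv_of_ncard4 hij4)
  obtain ⟨b, hSjk, hAjb, hAkb, hCjb', hCkb', hbb0, hbt0, hb'b0, hb't0, hbfix⟩ :=
    A.inter_struct hjk (A.inter_ne_triv_of_ncard4 hjk4)
  obtain ⟨c, hSkl, hAkc, hAlc, hCkc', hClc', hcb0, hct0, hc'b0, hc't0, hcfix⟩ :=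
    A.inter_struct hkl (A.inter_ne_triv_of_ncard4 hkl4)
  obtain ⟨e, hSli, hAle, hAie, hCle', hCie', heb0, het0, he'b0, he't0, hefix⟩ :=
    A.inter_struct hli (A.inter_ne_triv_of_ncard4 hli4)
  have hai : a ∈ A.blk i := hAia.1
  have haj : a ∈ A.blk j := hAja.1
  have hbj : b ∈ A.blk j := hAjb.1
  have hbk : b ∈ A.blk k := hAkb.1
  have hck : c ∈ A.blk k := hAkc.1
  have hcl : c ∈ A.blk l := hAlc.1
  have hel : e ∈ A.blk l := hAle.1
  have hei : e ∈ A.blk i := hAie.1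
  have hb'j : A.compl b ∈ A.blk j := hCjb'.1
  have hb'k : A.compl b ∈ A.blk k := hCkb'.1
  have he'l : A.compl e ∈ A.blk l := hCle'.1
  have he'i : A.compl e ∈ A.blk i := hCie'.1
  -- non-membership facts
  have hank : a ∉ A.blk k := A.not_mem_of_pair hik hai hab0 hat0
  have hanl : a ∉ A.blk l := A.not_mem_of_triple hTijl hai haj hab0 hat0
  have hbni : b ∉ A.blk i := fun h => A.not_mem_of_triple hTijk h hbj hbb0 hbt0 hbk
  have hcni : c ∉ A.blk i := fun h =>
    A.not_mem_of_pair hik h hcb0 hct0 hck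
  have hcnj : c ∉ A.blk j := fun h => A.not_mem_of_triple hTjkl h hck hcb0 hct0 hcl
  have henj : e ∉ A.blk j := fun h =>
    A.not_mem_of_pair hjl h heb0 het0 hel
  have hbne : b ≠ e := fun h => henj (h ▸ hbj)
  have hab : a ≠ b := fun h => hank (h ▸ hbk)
  have hac : a ≠ c := fun h => hank (h ▸ hck)
  have hcb : c ≠ b := fun h => hcnj (h ▸ hbj)
  have hae : a ≠ e := fun h => hanl (h ▸ hel)
  have hce : c ≠ e := fun h => hcni (h ▸ hei)
  -- upper bounds compl b and compl e
  have haleb' : A.le j a (A.compl b) := A.atom_le_compl_of_atom hAja hAjb hab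
  have hcleb' : A.le k c (A.compl b) := A.atom_le_compl_of_atom hAkc hAkb hcb
  have halee' : A.le i a (A.compl e) := A.atom_le_compl_of_atom hAia hAie hae
  have hclee' : A.le l c (A.compl e) := A.atom_le_compl_of_atom hAlc hAle hce
  obtain ⟨s, hsa, hsc, hlub⟩ := hsup a c
  have hsb' : A.gle s (A.compl b) :=
    hlub _ ⟨j, haj, hb'j, haleb'⟩ ⟨k, hck, hb'k, hcleb'⟩
  have hse' : A.gle s (A.compl e) :=
    hlub _ ⟨i, hai, he'i, halee'⟩ ⟨l, hcl, he'l, hclee'⟩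
  have hst : s ≠ A.top := by
    intro h
    rw [h] at hsb'
    exact hb't0 (A.gle_eq_top hsb')
  have hsna : s ≠ a := by
    intro h
    rw [h] at hsc
    rcases A.gle_atom hAia hsc with h1 | h1 <;> [exact hcb0 h1; exact hac h1.symm]
  obtain ⟨p, hap, hsp, hlep⟩ := hsa
  obtain ⟨q, hcq, hsq, hleq⟩ := hsc
  have hsb0 : s ≠ A.bot := by
    intro h
    rw [h] at hlep
    exact hab0 (A.eq_bot_of_le_bot hap hlep)
  by_cases hpq : p = q
  · subst hpq
    -- a and c both belong to block p : impossible or a 3-loop (j,k,p)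
    have hpi : p ≠ i := fun h => hcni (h ▸ hcq)
    have hpj : p ≠ j := fun h => hcnj (h ▸ hcq)
    have hpk : p ≠ k := fun h => hank (h ▸ hap)
    have hpl : p ≠ l := fun h => hanl (h ▸ hap)
    -- blocks j, k, p form an atomic loop of order 3
    have hkp4 : (A.blk k ∩ A.blk p).ncard = 4 :=
      A.inter_ncard4 (Ne.symm hpk) (A.inter_ne_triv ⟨hck, hcq⟩ hcb0 hct0)
    have hpj4 : (A.blk p ∩ A.blk j).ncard = 4 :=
      A.inter_ncard4 hpj (A.inter_ne_triv ⟨hap, haj⟩ hab0 hat0)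
    -- canonical atom of S(j,p)
    obtain ⟨f, hSjp, hAjf, hApf, hCjf', hCpf', hfb0, hft0, hf'b0, hf't0, hffix⟩ :=
      A.inter_struct (Ne.symm hpj) (A.inter_ne_triv ⟨haj, hap⟩ hab0 hat0)
    have haf : a = f := A.eq_atom_of_mem hSjp ⟨haj, hap⟩ hAja hCjf' hat0
    have hTjkp : A.blk j ∩ A.blk k ∩ A.blk p = {A.bot, A.top} := by
      apply Set.Subset.antisymm
      · rintro t ⟨⟨htj, htk⟩, htp⟩
        have ht4 : t ∈ ({A.bot, A.top, b, A.compl b} : Set K) := hSjk ▸ ⟨htj, htk⟩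
        simp only [Set.mem_insert_iff, Set.mem_singleton_iff] at ht4
        rcases ht4 with h1 | h1 | h1 | h1
        · exact Or.inl h1
        · exact Or.inr h1
        · exfalso
          subst h1
          have := A.eq_atom_of_mem hSjp ⟨htj, htp⟩ hAjb hCjf' hbt0
          exact hab (haf.trans this.symm)
        · exfalso
          subst h1
          have := A.eq_coatom_of_mem hSjp ⟨htj, htp⟩ hCjb' hAjf hb'b0
          rw [← haf] at this
          exact hab (A.compl_inj this).symm
      · intro t h1
        simp only [Set.mem_insert_iff, Set.mem_singleton_iff] at h1
        rcases h1 with h1 | h1 <;> subst h1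
        · exact ⟨⟨A.bot_mem j, A.bot_mem k⟩, A.bot_mem p⟩
        · exact ⟨⟨A.top_mem j, A.top_mem k⟩, A.top_mem p⟩
    exact hnl3 ⟨j, k, p, hjk4, hkp4, hpj4, hTjkp⟩
  · -- s is a shared coatom; then compl b = s = compl e, contradiction
    rcases A.shared_type hpq hsp hsq hsb0 hst with hA | hC
    · rcases hA.1.2.2 a hap hlep with h1 | h1
      · exact hab0 h1
      · exact hsna h1.symm
    · obtain ⟨r, hsr, hb'r, hler⟩ := hsb'
      have hCr : A.IsCo r s := (hC.1).propagate A hsr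
      have hb's : A.compl b = s := by
        rcases hCr.2.2 _ hb'r hler with h1 | h1 <;> [exact absurd h1 hb't0; exact h1]
      obtain ⟨r', hsr', he'r', hler'⟩ := hse'
      have hCr' : A.IsCo r' s := (hC.1).propagate A hsr'
      have he's : A.compl e = s := by
        rcases hCr'.2.2 _ he'r' hler' with h1 | h1 <;> [exact absurd h1 he't0; exact h1]
      exact hbne (A.compl_inj (hb's.trans he's.symm))

end PastedFamily


namespace PastedFamily

variable {K ι : Type*} (A : PastedFamily K ι)

lemma paraOM_always : A.ParaOM := by
  intro x y hxy hz
  obtain ⟨t, hxt, hyt, hle⟩ := hxy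
  have hx't := A.compl_mem t x hxt
  have hm := A.inf_mem t _ y hx't hyt
  have h0 : A.inf t (A.compl x) y = A.bot :=
    hz _ ⟨t, hm, hx't, A.inf_le_left t _ y hx't hyt⟩
      ⟨t, hm, hyt, A.inf_le_right t _ y hx't hyt⟩
  exact A.blockParaOM t x y hxt hyt hle h0

lemma isLub_of_gle {x y : K} (h : A.gle x y) : A.IsLubA x y y :=
  ⟨h, A.gle_refl y, fun _ _ hz => hz⟩

lemma isLub_of_gle' {x y : K} (h : A.gle y x) : A.IsLubA x y x :=
  ⟨A.gle_refl x, h, fun _ hz _ => hz⟩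

lemma isLub_top_left {i : ι} {x y : K} (hc : A.IsCo i x) (hn : ¬ A.gle y x) :
    A.IsLubA x y A.top := by
  refine ⟨A.gle_top x, A.gle_top y, fun z hxz hyz => ?_⟩
  rcases A.gle_co hc hxz with h | h
  · exact h ▸ A.gle_refl A.top
  · exact absurd (h ▸ hyz) hn

lemma isLub_top_right {i : ι} {x y : K} (hc : A.IsCo i y) (hn : ¬ A.gle x y) :
    A.IsLubA x y A.top := by
  refine ⟨A.gle_top x, A.gle_top y, fun z hxz hyz => ?_⟩
  rcases A.gle_co hc hyz with h | h
  · exact h ▸ A.gle_refl A.top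
  · exact absurd (h ▸ hxz) hn

lemma isGlb_of_isLub_compl {x y s : K}
    (h : A.IsLubA (A.compl x) (A.compl y) s) : A.IsGlbA x y (A.compl s) := by
  obtain ⟨h1, h2, h3⟩ := h
  refine ⟨?_, ?_, ?_⟩
  · have := A.gle_compl h1
    rwa [A.compl_invol] at this
  · have := A.gle_compl h2
    rwa [A.compl_invol] at this
  · intro z hzx hzy
    have h4 := A.gle_compl hzx
    have h5 := A.gle_compl hzy
    have h6 := h3 _ h4 h5
    have h7 := A.gle_compl h6
    rwa [A.compl_invol] at h7

lemma exists_nontriv_of_ne_triv {S : Set K} (hb : A.bot ∈ S) (ht : A.top ∈ S)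
    (h : S ≠ {A.bot, A.top}) : ∃ s ∈ S, s ≠ A.bot ∧ s ≠ A.top := by
  have hsub : ¬(S ⊆ {A.bot, A.top}) := by
    intro hs
    refine h (Set.Subset.antisymm hs ?_)
    intro w hw
    simp only [Set.mem_insert_iff, Set.mem_singleton_iff] at hw
    rcases hw with h1 | h1
    · exact h1 ▸ hb
    · exact h1 ▸ ht
  obtain ⟨s, hs, hsnt⟩ := Set.not_subset.mp hsub
  simp only [Set.mem_insert_iff, Set.mem_singleton_iff, not_or] at hsnt
  exact ⟨s, hs, hsnt⟩

end PastedFamily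


namespace PastedFamily

variable {K ι : Type*} (A : PastedFamily K ι)

lemma upper_coatom_data {x y z : K}
    (hnb : ∀ t, x ∈ A.blk t → y ∈ A.blk t → False)
    (hnyx : ¬ A.gle y x) (hx0 : x ≠ A.bot)
    (hxz : A.gle x z) (hyz : A.gle y z) (hzt : z ≠ A.top) :
    ∃ m n, m ≠ n ∧ x ∈ A.blk m ∧ z ∈ A.blk m ∧ A.le m x z ∧
      y ∈ A.blk n ∧ z ∈ A.blk n ∧ A.le n y z ∧ A.IsCo m z ∧ A.IsCo n z ∧
      z ≠ A.bot := by
  obtain ⟨m, hxm, hzm, hlem⟩ := hxz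
  obtain ⟨n, hyn, hzn, hlen⟩ := hyz
  have hmn : m ≠ n := fun e => hnb n (e ▸ hxm) hyn
  have hz0 : z ≠ A.bot := by
    intro e; rw [e] at hlem; exact hx0 (A.eq_bot_of_le_bot hxm hlem)
  rcases A.shared_type hmn hzm hzn hz0 hzt with hA | hC
  · rcases hA.1.2.2 x hxm hlem with h1 | h1
    · exact absurd h1 hx0
    · exact absurd ⟨n, hyn, h1.symm ▸ hzn, h1.symm ▸ hlen⟩ hnyx
  · exact ⟨m, n, hmn, hxm, hzm, hlem, hyn, hzn, hlen, hC.1, hC.2, hz0⟩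

lemma caseII_aux {x y c1 c2 : K} {m1 n1 m2 n2 : ι}
    (hnl3 : ¬ ∃ i j k : ι, A.AtomicLoop3 i j k)
    (hnb : ∀ t, x ∈ A.blk t → y ∈ A.blk t → False)
    (hxny : x ≠ y)
    (hx_noco : ∀ t, ¬ A.IsCo t x) (hy_noco : ∀ t, ¬ A.IsCo t y)
    (hx0 : x ≠ A.bot) (hxt : x ≠ A.top) (hy0 : y ≠ A.bot) (hyt : y ≠ A.top)
    (hxm1 : x ∈ A.blk m1) (hxm2 : x ∈ A.blk m2)
    (hyn1 : y ∈ A.blk n1) (hyn2 : y ∈ A.blk n2)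
    (hc1m1 : c1 ∈ A.blk m1) (hc1n1 : c1 ∈ A.blk n1)
    (hc2m2 : c2 ∈ A.blk m2) (hc2n2 : c2 ∈ A.blk n2)
    (hCc1 : A.IsCo m1 c1) (hCc2 : A.IsCo m2 c2)
    (hc12 : c1 ≠ c2) (hm12 : m1 ≠ m2) (hn12 : n1 ≠ n2)
    (hD1 : A.blk m1 ∩ A.blk n2 ≠ {A.bot, A.top}) : False := by
  have hm1n1 : m1 ≠ n1 := fun e => hnb n1 (e ▸ hxm1) hyn1
  have hm1n2 : m1 ≠ n2 := fun e => hnb n2 (e ▸ hxm1) hyn2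
  have hm2n2 : m2 ≠ n2 := fun e => hnb n2 (e ▸ hxm2) hyn2
  -- structure of S(n1, n2) : canonical atom is y
  obtain ⟨g, hSg, hAg1, hAg2, hCg1, hCg2, hgb, hgt, hg'b, hg't, hgfix⟩ :=
    A.inter_struct hn12 (A.inter_ne_triv ⟨hyn1, hyn2⟩ hy0 hyt)
  have hyatom : A.IsAt n1 y := by
    rcases A.shared_type hn12 hyn1 hyn2 hy0 hyt with h | h
    · exact h.1
    · exact absurd h.1 (hy_noco n1)
  have hyg : y = g := A.eq_atom_of_mem hSg ⟨hyn1, hyn2⟩ hyatom hCg1 hyt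
  subst hyg
  have hy'12 : A.compl y ∈ A.blk n1 ∩ A.blk n2 := by rw [hSg]; simp
  -- structure of S(m1, n1) : canonical coatom is c1
  obtain ⟨f, hSf, hAfm1, hAfn1, hCfm1, hCfn1, hfb, hft, hf'b, hf't, hffix⟩ :=
    A.inter_struct hm1n1 (A.inter_ne_triv ⟨hc1m1, hc1n1⟩ (hCc1.ne_bot A) hCc1.2.1)
  have hc1f : c1 = A.compl f :=
    A.eq_coatom_of_mem hSf ⟨hc1m1, hc1n1⟩ hCc1 hAfm1 (hCc1.ne_bot A)
  by_cases hT1 : A.blk m1 ∩ A.blk n1 ∩ A.blk n2 = {A.bot, A.top}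
  · refine hnl3 ⟨m1, n1, n2, ?_, ?_, ?_, hT1⟩
    · exact A.inter_ncard4 hm1n1 (A.inter_ne_triv ⟨hc1m1, hc1n1⟩ (hCc1.ne_bot A) hCc1.2.1)
    · exact A.inter_ncard4 hn12 (A.inter_ne_triv ⟨hyn1, hyn2⟩ hy0 hyt)
    · refine A.inter_ncard4 (Ne.symm hm1n2) ?_
      rw [Set.inter_comm]; exact hD1
  · obtain ⟨t, htm, ht0, htt⟩ := A.exists_nontriv_of_ne_triv
      (S := A.blk m1 ∩ A.blk n1 ∩ A.blk n2)
      ⟨⟨A.bot_mem m1, A.bot_mem n1⟩, A.bot_mem n2⟩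
      ⟨⟨A.top_mem m1, A.top_mem n1⟩, A.top_mem n2⟩ hT1
    have htn : t ∈ ({A.bot, A.top, y, A.compl y} : Set K) := hSg ▸ ⟨htm.1.2, htm.2⟩
    simp only [Set.mem_insert_iff, Set.mem_singleton_iff] at htn
    rcases htn with h1 | h1 | h1 | h1
    · exact ht0 h1
    · exact htt h1
    · exact hnb m1 hxm1 (h1 ▸ htm.1.1)
    · -- compl y ∈ blk m1 , hence compl y = c1
      have hy'm1 : A.compl y ∈ A.blk m1 := h1 ▸ htm.1.1
      have hy'c1 : A.compl y = c1 := by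
        have h2 : A.compl y = A.compl f :=
          A.eq_coatom_of_mem hSf ⟨hy'm1, hy'12.1⟩ ((hCg1).propagate A hy'm1) hAfm1 hg'b
        rw [h2, ← hc1f]
      by_cases hT2 : A.blk m1 ∩ A.blk m2 ∩ A.blk n2 = {A.bot, A.top}
      · refine hnl3 ⟨m1, m2, n2, ?_, ?_, ?_, hT2⟩
        · exact A.inter_ncard4 hm12 (A.inter_ne_triv ⟨hxm1, hxm2⟩ hx0 hxt)
        · exact A.inter_ncard4 hm2n2
            (A.inter_ne_triv ⟨hc2m2, hc2n2⟩ (hCc2.ne_bot A) hCc2.2.1)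
        · refine A.inter_ncard4 (Ne.symm hm1n2) ?_
          rw [Set.inter_comm]; exact hD1
      · obtain ⟨t', htm', ht0', htt'⟩ := A.exists_nontriv_of_ne_triv
          (S := A.blk m1 ∩ A.blk m2 ∩ A.blk n2)
          ⟨⟨A.bot_mem m1, A.bot_mem m2⟩, A.bot_mem n2⟩
          ⟨⟨A.top_mem m1, A.top_mem m2⟩, A.top_mem n2⟩ hT2
        -- structure of S(m1, m2) : canonical atom is x
        obtain ⟨w, hSw, hAwm1, hAwm2, hCwm1, hCwm2, hwb, hwt, hw'b, hw't, hwfix⟩ :=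
          A.inter_struct hm12 (A.inter_ne_triv ⟨hxm1, hxm2⟩ hx0 hxt)
        have hxatom : A.IsAt m1 x := by
          rcases A.shared_type hm12 hxm1 hxm2 hx0 hxt with h | h
          · exact h.1
          · exact absurd h.1 (hx_noco m1)
        have hxw : x = w := A.eq_atom_of_mem hSw ⟨hxm1, hxm2⟩ hxatom hCwm1 hxt
        subst hxw
        have hx'12 : A.compl x ∈ A.blk m1 ∩ A.blk m2 := by rw [hSw]; simp
        have htw : t' ∈ ({A.bot, A.top, x, A.compl x} : Set K) :=
          hSw ▸ ⟨htm'.1.1, htm'.1.2⟩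
        simp only [Set.mem_insert_iff, Set.mem_singleton_iff] at htw
        rcases htw with h2 | h2 | h2 | h2
        · exact ht0' h2
        · exact htt' h2
        · exact hnb n2 (h2 ▸ htm'.2) hyn2
        · -- compl x ∈ blk n2
          have hx'n2 : A.compl x ∈ A.blk n2 := h2 ▸ htm'.2
          -- the intersection S(m1, n2) contains the two distinct coatoms
          -- compl x and compl y : contradiction
          obtain ⟨u, hSu, hAum1, hAun2, hCum1, hCun2, hub, hut, hu'b, hu't, hufix⟩ :=
            A.inter_struct hm1n2 hD1
          have h3 : A.compl x = A.compl u :=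
            A.eq_coatom_of_mem hSu ⟨hx'12.1, hx'n2⟩ hCwm1 hAum1 hw'b
          have h4 : A.compl y = A.compl u :=
            A.eq_coatom_of_mem hSu ⟨hy'm1, hy'12.2⟩ ((hCg1).propagate A hy'm1)
              hAum1 hg'b
          exact hxny (A.compl_inj (h3.trans h4.symm))

end PastedFamily


namespace PastedFamily

variable {K ι : Type*} (A : PastedFamily K ι)

lemma triv_subset_triple (i j k : ι) :
    ({A.bot, A.top} : Set K) ⊆ A.blk i ∩ A.blk j ∩ A.blk k := by
  intro t h1
  simp only [Set.mem_insert_iff, Set.mem_singleton_iff] at h1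
  rcases h1 with h1 | h1 <;> subst h1
  · exact ⟨⟨A.bot_mem i, A.bot_mem j⟩, A.bot_mem k⟩
  · exact ⟨⟨A.top_mem i, A.top_mem j⟩, A.top_mem k⟩

lemma sup_exists (hnl3 : ¬ ∃ i j k : ι, A.AtomicLoop3 i j k)
    (hnl4 : ¬ ∃ i j k l : ι, A.AtomicLoop4 i j k l) (x y : K) :
    ∃ s, A.IsLubA x y s := by
  classical
  by_cases h1 : A.gle x y
  · exact ⟨y, A.isLub_of_gle h1⟩
  by_cases h2 : A.gle y x
  · exact ⟨x, A.isLub_of_gle' h2⟩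
  by_cases h3 : ∃ i, A.IsCo i x
  · obtain ⟨i, hc⟩ := h3; exact ⟨A.top, A.isLub_top_left hc h2⟩
  by_cases h4 : ∃ i, A.IsCo i y
  · obtain ⟨i, hc⟩ := h4; exact ⟨A.top, A.isLub_top_right hc h1⟩
  push_neg at h3 h4
  have hx0 : x ≠ A.bot := fun e => h1 (by rw [e]; exact A.gle_bot y)
  have hy0 : y ≠ A.bot := fun e => h2 (by rw [e]; exact A.gle_bot x)
  have hxt : x ≠ A.top := fun e => h2 (by rw [e]; exact A.gle_top y)
  have hyt : y ≠ A.top := fun e => h1 (by rw [e]; exact A.gle_top x)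
  have hxy : x ≠ y := fun e => h1 (by rw [e]; exact A.gle_refl y)
  by_cases hcb : ∃ h, x ∈ A.blk h ∧ y ∈ A.blk h
  · -- Case I : a common block
    obtain ⟨h, hxh, hyh⟩ := hcb
    refine ⟨A.sup h x y,
      ⟨h, hxh, A.sup_mem h x y hxh hyh, A.le_sup_left h x y hxh hyh⟩,
      ⟨h, hyh, A.sup_mem h x y hxh hyh, A.le_sup_right h x y hxh hyh⟩, ?_⟩
    intro z hxz hyz
    by_cases hzt : z = A.top
    · subst hzt; exact A.gle_top _
    by_cases hzh : z ∈ A.blk h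
    · obtain ⟨m, hxm, hzm, hlem⟩ := hxz
      obtain ⟨n, hyn, hzn, hlen⟩ := hyz
      exact ⟨h, A.sup_mem h x y hxh hyh, hzh,
        A.sup_le h x y z hxh hyh hzh (A.le_compat m h x z hxm hzm hxh hzh hlem)
          (A.le_compat n h y z hyn hzn hyh hzh hlen)⟩
    exfalso
    obtain ⟨m, hxm, hzm, hlem⟩ := hxz
    obtain ⟨n, hyn, hzn, hlen⟩ := hyz
    have hmh : m ≠ h := fun e => hzh (e ▸ hzm)
    have hnh : n ≠ h := fun e => hzh (e ▸ hzn)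
    have hxat : A.IsAt h x := by
      rcases A.shared_type (Ne.symm hmh) hxh hxm hx0 hxt with h5 | h5
      · exact h5.1
      · exact absurd h5.1 (h3 h)
    have hyat : A.IsAt h y := by
      rcases A.shared_type (Ne.symm hnh) hyh hyn hy0 hyt with h5 | h5
      · exact h5.1
      · exact absurd h5.1 (h4 h)
    have hmn : m ≠ n := by
      intro e
      subst e
      obtain ⟨α, hSα, hAαh, hAαm, hCαh, hCαm, hαb, hαt, hα'b, hα't, hαfix⟩ :=
        A.inter_struct (Ne.symm hmh) (A.inter_ne_triv ⟨hxh, hxm⟩ hx0 hxt)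
      have e1 : x = α := A.eq_atom_of_mem hSα ⟨hxh, hxm⟩ hxat hCαh hxt
      have e2 : y = α := A.eq_atom_of_mem hSα ⟨hyh, hyn⟩ hyat hCαh hyt
      exact hxy (e1.trans e2.symm)
    have hz0 : z ≠ A.bot := by
      intro e; rw [e] at hlem; exact hx0 (A.eq_bot_of_le_bot hxm hlem)
    have hzco : A.IsCo m z ∧ A.IsCo n z := by
      rcases A.shared_type hmn hzm hzn hz0 hzt with h5 | h5
      · rcases h5.1.2.2 x hxm hlem with h6 | h6
        · exact absurd h6 hx0
        · exact absurd ⟨n, hyn, h6.symm ▸ hzn, h6.symm ▸ hlen⟩ h2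
      · exact h5
    obtain ⟨α, hSα, hAαh, hAαm, hCαh, hCαm, hαb, hαt, hα'b, hα't, hαfix⟩ :=
      A.inter_struct (Ne.symm hmh) (A.inter_ne_triv ⟨hxh, hxm⟩ hx0 hxt)
    have e1 : x = α := A.eq_atom_of_mem hSα ⟨hxh, hxm⟩ hxat hCαh hxt
    subst e1
    obtain ⟨β, hSβ, hAβh, hAβn, hCβh, hCβn, hβb, hβt, hβ'b, hβ't, hβfix⟩ :=
      A.inter_struct (Ne.symm hnh) (A.inter_ne_triv ⟨hyh, hyn⟩ hy0 hyt)
    have e2 : y = β := A.eq_atom_of_mem hSβ ⟨hyh, hyn⟩ hyat hCβh hyt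
    subst e2
    have hT : A.blk h ∩ A.blk m ∩ A.blk n = {A.bot, A.top} := by
      refine Set.Subset.antisymm ?_ (A.triv_subset_triple h m n)
      rintro t ⟨⟨hth, htm⟩, htn⟩
      have htx : t ∈ ({A.bot, A.top, x, A.compl x} : Set K) := hSα ▸ ⟨hth, htm⟩
      have hty : t ∈ ({A.bot, A.top, y, A.compl y} : Set K) := hSβ ▸ ⟨hth, htn⟩
      simp only [Set.mem_insert_iff, Set.mem_singleton_iff] at htx hty ⊢
      rcases htx with e | e | e | e
      · exact Or.inl e
      · exact Or.inr e
      · subst e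
        rcases hty with e | e | e | e
        · exact Or.inl e
        · exact Or.inr e
        · exact absurd e hxy
        · exfalso
          refine h4 h ?_
          have h6 : y = A.compl t := by rw [e, A.compl_invol]
          rw [h6]; exact hCαh
      · exfalso
        subst e
        rcases hty with e | e | e | e
        · exact hα'b e
        · exact hα't e
        · refine h4 h ?_
          rw [← e]; exact hCαh
        · exact hxy (A.compl_inj e)
    refine hnl3 ⟨h, m, n, ?_, ?_, ?_, hT⟩
    · exact A.inter_ncard4 (Ne.symm hmh) (A.inter_ne_triv ⟨hxh, hxm⟩ hx0 hxt)
    · exact A.inter_ncard4 hmn (A.inter_ne_triv ⟨hzm, hzn⟩ hz0 hzt)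
    · exact A.inter_ncard4 hnh (A.inter_ne_triv ⟨hyn, hyh⟩ hy0 hyt)
  · -- Case II : no common block
    have hnb : ∀ t, x ∈ A.blk t → y ∈ A.blk t → False := fun t ha hb => hcb ⟨t, ha, hb⟩
    by_cases h5 : ∃ z1 z2, (A.gle x z1 ∧ A.gle y z1 ∧ z1 ≠ A.top) ∧
        (A.gle x z2 ∧ A.gle y z2 ∧ z2 ≠ A.top) ∧ z1 ≠ z2
    · exfalso
      obtain ⟨z1, z2, ⟨hxz1, hyz1, hz1t⟩, ⟨hxz2, hyz2, hz2t⟩, hz12⟩ := h5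
      obtain ⟨m1, n1, hmn1, hxm1, hzm1, hlem1, hyn1, hzn1, hlen1, hCm1, hCn1, hz10⟩ :=
        A.upper_coatom_data hnb h2 hx0 hxz1 hyz1 hz1t
      obtain ⟨m2, n2, hmn2, hxm2, hzm2, hlem2, hyn2, hzn2, hlen2, hCm2, hCn2, hz20⟩ :=
        A.upper_coatom_data hnb h2 hx0 hxz2 hyz2 hz2t
      by_cases hm : m1 = m2
      · subst hm
        by_cases hn : n1 = n2
        · subst hn
          obtain ⟨f, hSf, hAfm, hAfn, hCfm, hCfn, _, _, _, _, _⟩ :=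
            A.inter_struct hmn1 (A.inter_ne_triv ⟨hzm1, hzn1⟩ hz10 hz1t)
          have e1 : z1 = A.compl f := A.eq_coatom_of_mem hSf ⟨hzm1, hzn1⟩ hCm1 hAfm hz10
          have e2 : z2 = A.compl f := A.eq_coatom_of_mem hSf ⟨hzm2, hzn2⟩ hCm2 hAfm hz20
          exact hz12 (e1.trans e2.symm)
        · -- blocks m1, n1, n2
          obtain ⟨g, hSg, hAg1, hAg2, hCg1, hCg2, hgb, hgt, hg'b, hg't, hgfix⟩ :=
            A.inter_struct hn (A.inter_ne_triv ⟨hyn1, hyn2⟩ hy0 hyt)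
          have hyat : A.IsAt n1 y := by
            rcases A.shared_type hn hyn1 hyn2 hy0 hyt with h6 | h6
            · exact h6.1
            · exact absurd h6.1 (h4 n1)
          have e0 : y = g := A.eq_atom_of_mem hSg ⟨hyn1, hyn2⟩ hyat hCg1 hyt
          subst e0
          have hy'12 : A.compl y ∈ A.blk n1 ∩ A.blk n2 := by rw [hSg]; simp
          by_cases hT : A.blk m1 ∩ A.blk n1 ∩ A.blk n2 = {A.bot, A.top}
          · refine hnl3 ⟨m1, n1, n2, ?_, ?_, ?_, hT⟩
            · exact A.inter_ncard4 hmn1 (A.inter_ne_triv ⟨hzm1, hzn1⟩ hz10 hz1t)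
            · exact A.inter_ncard4 hn (A.inter_ne_triv ⟨hyn1, hyn2⟩ hy0 hyt)
            · exact A.inter_ncard4 (Ne.symm hmn2)
                (A.inter_ne_triv ⟨hzn2, hzm2⟩ hz20 hz2t)
          · obtain ⟨t, htm, ht0, htt⟩ := A.exists_nontriv_of_ne_triv
              (S := A.blk m1 ∩ A.blk n1 ∩ A.blk n2)
              ⟨⟨A.bot_mem m1, A.bot_mem n1⟩, A.bot_mem n2⟩
              ⟨⟨A.top_mem m1, A.top_mem n1⟩, A.top_mem n2⟩ hT
            have htn : t ∈ ({A.bot, A.top, y, A.compl y} : Set K) :=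
              hSg ▸ ⟨htm.1.2, htm.2⟩
            simp only [Set.mem_insert_iff, Set.mem_singleton_iff] at htn
            rcases htn with e | e | e | e
            · exact ht0 e
            · exact htt e
            · exact hnb m1 hxm1 (e ▸ htm.1.1)
            · have hy'm1 : A.compl y ∈ A.blk m1 := e ▸ htm.1.1
              obtain ⟨f1, hSf1, hAf1m, _, _, _, _, _, _, _, _⟩ :=
                A.inter_struct hmn1 (A.inter_ne_triv ⟨hzm1, hzn1⟩ hz10 hz1t)
              have e1 : z1 = A.compl f1 :=
                A.eq_coatom_of_mem hSf1 ⟨hzm1, hzn1⟩ hCm1 hAf1m hz10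
              have e1' : A.compl y = A.compl f1 :=
                A.eq_coatom_of_mem hSf1 ⟨hy'm1, hy'12.1⟩
                  ((hCg1).propagate A hy'm1) hAf1m hg'b
              obtain ⟨f2, hSf2, hAf2m, _, _, _, _, _, _, _, _⟩ :=
                A.inter_struct hmn2 (A.inter_ne_triv ⟨hzm2, hzn2⟩ hz20 hz2t)
              have e2 : z2 = A.compl f2 :=
                A.eq_coatom_of_mem hSf2 ⟨hzm2, hzn2⟩ hCm2 hAf2m hz20
              have e2' : A.compl y = A.compl f2 :=
                A.eq_coatom_of_mem hSf2 ⟨hy'm1, hy'12.2⟩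
                  ((hCg2).propagate A hy'm1) hAf2m hg'b
              exact hz12 ((e1.trans e1'.symm).trans (e2'.trans e2.symm))
      · by_cases hn : n1 = n2
        · subst hn
          obtain ⟨w, hSw, hAwm1, hAwm2, hCwm1, hCwm2, hwb, hwt, hw'b, hw't, hwfix⟩ :=
            A.inter_struct hm (A.inter_ne_triv ⟨hxm1, hxm2⟩ hx0 hxt)
          have hxat : A.IsAt m1 x := by
            rcases A.shared_type hm hxm1 hxm2 hx0 hxt with h6 | h6
            · exact h6.1
            · exact absurd h6.1 (h3 m1)
          have e0 : x = w := A.eq_atom_of_mem hSw ⟨hxm1, hxm2⟩ hxat hCwm1 hxt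
          subst e0
          have hx'12 : A.compl x ∈ A.blk m1 ∩ A.blk m2 := by rw [hSw]; simp
          by_cases hT : A.blk m1 ∩ A.blk m2 ∩ A.blk n1 = {A.bot, A.top}
          · refine hnl3 ⟨m1, m2, n1, ?_, ?_, ?_, hT⟩
            · exact A.inter_ncard4 hm (A.inter_ne_triv ⟨hxm1, hxm2⟩ hx0 hxt)
            · exact A.inter_ncard4 hmn2 (A.inter_ne_triv ⟨hzm2, hzn2⟩ hz20 hz2t)
            · exact A.inter_ncard4 (Ne.symm hmn1)
                (A.inter_ne_triv ⟨hzn1, hzm1⟩ hz10 hz1t)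
          · obtain ⟨t, htm, ht0, htt⟩ := A.exists_nontriv_of_ne_triv
              (S := A.blk m1 ∩ A.blk m2 ∩ A.blk n1)
              ⟨⟨A.bot_mem m1, A.bot_mem m2⟩, A.bot_mem n1⟩
              ⟨⟨A.top_mem m1, A.top_mem m2⟩, A.top_mem n1⟩ hT
            have htn : t ∈ ({A.bot, A.top, x, A.compl x} : Set K) :=
              hSw ▸ ⟨htm.1.1, htm.1.2⟩
            simp only [Set.mem_insert_iff, Set.mem_singleton_iff] at htn
            rcases htn with e | e | e | e
            · exact ht0 e
            · exact htt e
            · exact hnb n1 (e ▸ htm.2) hyn1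
            · have hx'n1 : A.compl x ∈ A.blk n1 := e ▸ htm.2
              obtain ⟨f1, hSf1, hAf1m, _, _, _, _, _, _, _, _⟩ :=
                A.inter_struct hmn1 (A.inter_ne_triv ⟨hzm1, hzn1⟩ hz10 hz1t)
              have e1 : z1 = A.compl f1 :=
                A.eq_coatom_of_mem hSf1 ⟨hzm1, hzn1⟩ hCm1 hAf1m hz10
              have e1' : A.compl x = A.compl f1 :=
                A.eq_coatom_of_mem hSf1 ⟨hx'12.1, hx'n1⟩ hCwm1 hAf1m hw'b
              obtain ⟨f2, hSf2, hAf2m, _, _, _, _, _, _, _, _⟩ :=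
                A.inter_struct hmn2 (A.inter_ne_triv ⟨hzm2, hzn2⟩ hz20 hz2t)
              have e2 : z2 = A.compl f2 :=
                A.eq_coatom_of_mem hSf2 ⟨hzm2, hzn2⟩ hCm2 hAf2m hz20
              have e2' : A.compl x = A.compl f2 :=
                A.eq_coatom_of_mem hSf2 ⟨hx'12.2, hx'n1⟩ hCwm2 hAf2m hw'b
              exact hz12 ((e1.trans e1'.symm).trans (e2'.trans e2.symm))
        · -- m1, m2, n1, n2 pairwise distinct
          by_cases hD1 : A.blk m1 ∩ A.blk n2 = {A.bot, A.top}
          · by_cases hD2 : A.blk m2 ∩ A.blk n1 = {A.bot, A.top}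
            · -- 4-loop (m1, n1, n2, m2)
              obtain ⟨g, hSg, hAg1, hAg2, hCg1, hCg2, hgb, hgt, hg'b, hg't, hgfix⟩ :=
                A.inter_struct hn (A.inter_ne_triv ⟨hyn1, hyn2⟩ hy0 hyt)
              have hyat : A.IsAt n1 y := by
                rcases A.shared_type hn hyn1 hyn2 hy0 hyt with h6 | h6
                · exact h6.1
                · exact absurd h6.1 (h4 n1)
              have e0 : y = g := A.eq_atom_of_mem hSg ⟨hyn1, hyn2⟩ hyat hCg1 hyt
              subst e0
              have hy'12 : A.compl y ∈ A.blk n1 ∩ A.blk n2 := by rw [hSg]; simp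
              obtain ⟨w, hSw, hAwm1, hAwm2, hCwm1, hCwm2, hwb, hwt, hw'b, hw't, hwfix⟩ :=
                A.inter_struct hm (A.inter_ne_triv ⟨hxm1, hxm2⟩ hx0 hxt)
              have hxat : A.IsAt m1 x := by
                rcases A.shared_type hm hxm1 hxm2 hx0 hxt with h6 | h6
                · exact h6.1
                · exact absurd h6.1 (h3 m1)
              have e0' : x = w := A.eq_atom_of_mem hSw ⟨hxm1, hxm2⟩ hxat hCwm1 hxt
              subst e0'
              have hx'12 : A.compl x ∈ A.blk m1 ∩ A.blk m2 := by rw [hSw]; simp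
              refine hnl4 ⟨m1, n1, n2, m2, ?_, ?_, ?_, ?_, hD1, ?_, ?_, ?_, ?_, ?_⟩
              · exact A.inter_ncard4 hmn1 (A.inter_ne_triv ⟨hzm1, hzn1⟩ hz10 hz1t)
              · exact A.inter_ncard4 hn (A.inter_ne_triv ⟨hyn1, hyn2⟩ hy0 hyt)
              · exact A.inter_ncard4 (Ne.symm hmn2)
                  (A.inter_ne_triv ⟨hzn2, hzm2⟩ hz20 hz2t)
              · exact A.inter_ncard4 (Ne.symm hm)
                  (A.inter_ne_triv ⟨hxm2, hxm1⟩ hx0 hxt)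
              · rw [Set.inter_comm]; exact hD2
              · -- m1 ∩ n1 ∩ n2
                refine Set.Subset.antisymm ?_ (A.triv_subset_triple m1 n1 n2)
                rintro t ⟨⟨htm1, htn1⟩, htn2⟩
                have htn : t ∈ ({A.bot, A.top, y, A.compl y} : Set K) :=
                  hSg ▸ ⟨htn1, htn2⟩
                simp only [Set.mem_insert_iff, Set.mem_singleton_iff] at htn ⊢
                rcases htn with e | e | e | e
                · exact Or.inl e
                · exact Or.inr e
                · exact absurd (e ▸ htm1) (fun hh => hnb m1 hxm1 hh)
                · exfalso
                  have : A.compl y ∈ A.blk m1 ∩ A.blk n2 := ⟨e ▸ htm1, hy'12.2⟩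
                  rw [hD1] at this
                  rcases this with e' | e'
                  · exact hg'b e'
                  · exact hg't e'
              · -- m1 ∩ n1 ∩ m2
                refine Set.Subset.antisymm ?_ (A.triv_subset_triple m1 n1 m2)
                rintro t ⟨⟨htm1, htn1⟩, htm2⟩
                have htn : t ∈ ({A.bot, A.top, x, A.compl x} : Set K) :=
                  hSw ▸ ⟨htm1, htm2⟩
                simp only [Set.mem_insert_iff, Set.mem_singleton_iff] at htn ⊢
                rcases htn with e | e | e | e
                · exact Or.inl e
                · exact Or.inr e
                · exact absurd (e ▸ htn1) (fun hh => hnb n1 hh hyn1)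
                · exfalso
                  have : A.compl x ∈ A.blk m2 ∩ A.blk n1 := ⟨hx'12.2, e ▸ htn1⟩
                  rw [hD2] at this
                  rcases this with e' | e'
                  · exact hw'b e'
                  · exact hw't e'
              · -- m1 ∩ n2 ∩ m2
                refine Set.Subset.antisymm ?_ (A.triv_subset_triple m1 n2 m2)
                rintro t ⟨⟨htm1, htn2⟩, _⟩
                have : t ∈ A.blk m1 ∩ A.blk n2 := ⟨htm1, htn2⟩
                rw [hD1] at this
                exact this
              · -- n1 ∩ n2 ∩ m2
                refine Set.Subset.antisymm ?_ (A.triv_subset_triple n1 n2 m2)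
                rintro t ⟨⟨htn1, htn2⟩, htm2⟩
                have htn : t ∈ ({A.bot, A.top, y, A.compl y} : Set K) :=
                  hSg ▸ ⟨htn1, htn2⟩
                simp only [Set.mem_insert_iff, Set.mem_singleton_iff] at htn ⊢
                rcases htn with e | e | e | e
                · exact Or.inl e
                · exact Or.inr e
                · exact absurd (e ▸ htm2) (fun hh => hnb m2 hxm2 hh)
                · exfalso
                  have : A.compl y ∈ A.blk m2 ∩ A.blk n1 := ⟨e ▸ htm2, hy'12.1⟩
                  rw [hD2] at this
                  rcases this with e' | e'
                  · exact hg'b e'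
                  · exact hg't e'
            · exact A.caseII_aux hnl3 hnb hxy h3 h4 hx0 hxt hy0 hyt hxm2 hxm1
                hyn2 hyn1 hzm2 hzn2 hzm1 hzn1 hCm2 hCm1 (Ne.symm hz12)
                (Ne.symm hm) (Ne.symm hn) hD2
          · exact A.caseII_aux hnl3 hnb hxy h3 h4 hx0 hxt hy0 hyt hxm1 hxm2
              hyn1 hyn2 hzm1 hzn1 hzm2 hzn2 hCm1 hCm2 hz12 hm hn hD1
    · by_cases h6 : ∃ c, A.gle x c ∧ A.gle y c ∧ c ≠ A.top
      · obtain ⟨c, hxc, hyc, hct⟩ := h6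
        refine ⟨c, hxc, hyc, ?_⟩
        intro z hxz hyz
        by_cases hzt : z = A.top
        · subst hzt; exact A.gle_top c
        · have he : c = z := by
            by_contra hne
            exact h5 ⟨c, z, ⟨hxc, hyc, hct⟩, ⟨hxz, hyz, hzt⟩, hne⟩
          rw [← he]; exact A.gle_refl c
      · refine ⟨A.top, A.gle_top x, A.gle_top y, ?_⟩
        intro z hxz hyz
        by_cases hzt : z = A.top
        · subst hzt; exact A.gle_refl A.top
        · exact absurd ⟨hxz, hyz, hzt⟩ (fun hc => h6 ⟨z, hc⟩)

end PastedFamily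

/-- An atomic amalgam of Kleene lattices is a paraorthomodular lattice
(lattice-ordered and paraorthomodular) iff it contains no atomic loop of
order 3 or 4. -/
theorem stmt_14 {K ι : Type*} (A : PastedFamily K ι) :
    ((∀ x y : K, ∃ s, A.IsLubA x y s) ∧ (∀ x y : K, ∃ m, A.IsGlbA x y m) ∧
      A.ParaOM) ↔
    ((¬ ∃ i j k : ι, A.AtomicLoop3 i j k) ∧
     ¬ ∃ i j k l : ι, A.AtomicLoop4 i j k l) := by
  constructor
  · rintro ⟨hsup, _, _⟩
    exact ⟨A.noLoop3 hsup, A.noLoop4 hsup (A.noLoop3 hsup)⟩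
  · rintro ⟨hnl3, hnl4⟩
    refine ⟨A.sup_exists hnl3 hnl4, ?_, A.paraOM_always⟩
    intro x y
    obtain ⟨s, hs⟩ := A.sup_exists hnl3 hnl4 (A.compl x) (A.compl y)
    exact ⟨A.compl s, A.isGlb_of_isLub_compl hs⟩
end

section
/- Let (P, ≤, (ˣ : x ∈ P), 0, 1) be a relatively paraorthomodular mub-complete poset and define x → y := { mʸ | m ∈ Min U(x,y) }. Then x ≤ y if and only if x → y = {1}. -/
/-- The set of minimal elements of the upper cone `U(x,y)`. -/
def MinU {P : Type*} [PartialOrder P] (x y : P) : Set P :=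
  {m | x ≤ m ∧ y ≤ m ∧ ∀ z, x ≤ z → y ≤ z → z ≤ m → z = m}

/-- The implication `x → y := { mʸ | m ∈ Min U(x,y) }`, where `c y m` denotes
the sectional involution `ʸ` on `[y,1]` applied to `m`. -/
def rarrow {P : Type*} [PartialOrder P] (c : P → P → P) (x y : P) : Set P :=
  (fun m => c y m) '' MinU x y

theorem stmt_15 {P : Type*} [PartialOrder P] [BoundedOrder P] (c : P → P → P)
    (hmem : ∀ x y : P, x ≤ y → x ≤ c x y)
    (hAnti : ∀ x y z : P, x ≤ y → x ≤ z → y ≤ z → c x z ≤ c x y)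
    (hInv : ∀ x y : P, x ≤ y → c x (c x y) = y)
    (hRP : ∀ x y z : P, x ≤ y → y ≤ z →
      (∀ w, x ≤ w → w ≤ c x y → w ≤ z → w = x) → y = z)
    (hMub : ∀ (M : Finset P) (x : P), (∀ m ∈ M, m ≤ x) →
      ∃ z, z ≤ x ∧ (∀ m ∈ M, m ≤ z) ∧ ∀ w, (∀ m ∈ M, m ≤ w) → w ≤ z → w = z)
    (x y : P) :
    x ≤ y ↔ rarrow c x y = {⊤} := by
  have hct : c y ⊤ = y := by
    refine le_antisymm ?_ (hmem y ⊤ le_top)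
    calc c y ⊤ ≤ c y (c y y) := hAnti y (c y y) ⊤ (hmem y y le_rfl) le_top le_top
      _ = y := hInv y y le_rfl
  have hcy : c y y = ⊤ := by
    have h := hInv y ⊤ le_top
    rwa [hct] at h
  constructor
  · intro hxy
    have hMin : MinU x y = {y} := by
      ext m
      simp only [MinU, Set.mem_setOf_eq, Set.mem_singleton_iff]
      constructor
      · rintro ⟨h1, h2, h3⟩
        exact (h3 y hxy le_rfl h2).symm
      · rintro rfl
        exact ⟨hxy, le_rfl, fun z _ hz2 hz3 => le_antisymm hz3 hz2⟩
    simp [rarrow, hMin, hcy]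
  · intro h
    classical
    obtain ⟨z, hz1, hz2, hz3⟩ := hMub {x, y} ⊤ (fun m _ => le_top)
    have hx : x ≤ z := hz2 x (by simp)
    have hy : y ≤ z := hz2 y (by simp)
    have hzmem : z ∈ MinU x y := by
      refine ⟨hx, hy, fun w hw1 hw2 hw3 => hz3 w ?_ hw3⟩
      intro m hm
      rcases Finset.mem_insert.mp hm with rfl | hm
      · exact hw1
      · rcases Finset.mem_singleton.mp hm with rfl
        exact hw2
    have hmem' : c y z ∈ rarrow c x y := ⟨z, hzmem, rfl⟩
    rw [h, Set.mem_singleton_iff] at hmem'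
    have : z = y := by
      have h2 := hInv y z hy
      rw [hmem', hct] at h2
      exact h2.symm
    exact this ▸ hx
end

section
/- Let (P, ≤, (ˣ : x ∈ P), 0, 1) be a relatively paraorthomodular mub-complete poset with x → y := { mʸ | m ∈ Min U(x,y) }. Then (x → y) → y = Min U(x,y) and ((x → y) → y) → y = x → y, where the operator is extended to sets by unions. -/
theorem stmt_16 {P : Type*} [PartialOrder P] [BoundedOrder P] (c : P → P → P)
    (hmem : ∀ x y : P, x ≤ y → x ≤ c x y)
    (hAnti : ∀ x y z : P, x ≤ y → x ≤ z → y ≤ z → c x z ≤ c x y)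
    (hInv : ∀ x y : P, x ≤ y → c x (c x y) = y)
    (hRP : ∀ x y z : P, x ≤ y → y ≤ z →
      (∀ w, x ≤ w → w ≤ c x y → w ≤ z → w = x) → y = z)
    (hMub : ∀ (M : Finset P) (x : P), (∀ m ∈ M, m ≤ x) →
      ∃ z, z ≤ x ∧ (∀ m ∈ M, m ≤ z) ∧ ∀ w, (∀ m ∈ M, m ≤ w) → w ≤ z → w = z)
    (x y : P) :
    (⋃ a ∈ rarrow c x y, rarrow c a y) = MinU x y ∧
    (⋃ a ∈ ⋃ a ∈ rarrow c x y, rarrow c a y, rarrow c a y) = rarrow c x y := by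
  have key : ∀ a : P, y ≤ a → MinU a y = {a} := by
    intro a ha
    ext n
    simp only [MinU, Set.mem_setOf_eq, Set.mem_singleton_iff]
    constructor
    · rintro ⟨h1, _, h3⟩
      exact (h3 a le_rfl ha h1).symm
    · rintro rfl
      exact ⟨le_rfl, ha, fun z hz _ hz' => le_antisymm hz' hz⟩
  have hmin : (⋃ a ∈ rarrow c x y, rarrow c a y) = MinU x y := by
    ext n
    simp only [Set.mem_iUnion, rarrow, Set.mem_image, exists_prop]
    constructor
    · rintro ⟨a, ⟨m, hm, rfl⟩, n', hn', rfl⟩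
      rw [key _ (hmem y m hm.2.1)] at hn'
      rw [Set.mem_singleton_iff] at hn'
      rw [hn', hInv y m hm.2.1]
      exact hm
    · intro hn
      refine ⟨c y n, ⟨n, hn, rfl⟩, c y n, ?_, hInv y n hn.2.1⟩
      rw [key _ (hmem y n hn.2.1)]; rfl
  refine ⟨hmin, ?_⟩
  rw [hmin]
  ext n
  simp only [Set.mem_iUnion, rarrow, Set.mem_image, exists_prop]
  constructor
  · rintro ⟨m, hm, n', hn', rfl⟩
    rw [key _ hm.2.1, Set.mem_singleton_iff] at hn'
    exact ⟨n', hn' ▸ hm, rfl⟩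
  · rintro ⟨m, hm, rfl⟩
    refine ⟨m, hm, m, ?_, rfl⟩
    rw [key _ hm.2.1]; rfl
end

section
/- Let (L, ∨, ∧, ') be a lattice with an antitone involution, and define x ⊙ y := y ∧ (x ∨ y') and x → y := x' ∨ (x ∧ y) (Sasaki projection and Sasaki implication). Then the adjointness condition 'x ⊙ y ≤ z iff x ≤ y → z for all x, y, z' holds if and only if L satisfies both orthomodular identities x ∨ ((x ∨ y) ∧ x') = x ∨ y and x ∧ ((x ∧ y) ∨ x') = x ∧ y. -/
/-- In a lattice with antitone involution, with Sasaki projection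
`x ⊙ y := y ∧ (x ∨ y')` and Sasaki implication `x → y := x' ∨ (x ∧ y)`,
adjointness holds iff both orthomodular identities hold. -/
theorem stmt_17 {L : Type*} [Lattice L] (c : L → L)
    (hA : ∀ x y : L, x ≤ y → c y ≤ c x) (hI : ∀ x : L, c (c x) = x) :
    (∀ x y z : L, y ⊓ (x ⊔ c y) ≤ z ↔ x ≤ c y ⊔ (y ⊓ z)) ↔
      ((∀ x y : L, x ⊔ ((x ⊔ y) ⊓ c x) = x ⊔ y) ∧
       (∀ x y : L, x ⊓ ((x ⊓ y) ⊔ c x) = x ⊓ y)) := by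
  constructor
  · intro H
    constructor
    · intro x y
      apply le_antisymm
      · exact sup_le le_sup_left inf_le_left
      · have h := (H (x ⊔ y) (c x) (c x ⊓ (x ⊔ y))).mp
        rw [hI] at h
        have h1 : c x ⊓ (x ⊔ y ⊔ x) ≤ c x ⊓ (x ⊔ y) :=
          inf_le_inf_left _ (sup_le le_rfl le_sup_left)
        have h2 := h h1
        calc x ⊔ y ≤ x ⊔ (c x ⊓ (c x ⊓ (x ⊔ y))) := h2
          _ ≤ x ⊔ ((x ⊔ y) ⊓ c x) := by
              apply sup_le_sup_left
              rw [← inf_assoc, inf_idem, inf_comm]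
    · intro x y
      apply le_antisymm
      · have h := (H (x ⊓ y) x (x ⊓ y)).mpr
        have h1 : x ⊓ y ≤ c x ⊔ (x ⊓ (x ⊓ y)) := by
          apply le_sup_of_le_right
          rw [← inf_assoc, inf_idem]
        have h2 := h h1
        exact h2
      · exact le_inf inf_le_left (le_sup_of_le_left le_rfl)
  · rintro ⟨h1, h2⟩ x y z
    constructor
    · intro h
      have key : c y ⊔ (y ⊓ (x ⊔ c y)) = c y ⊔ x := by
        have := h1 (c y) x
        rw [hI] at this
        rw [← this, sup_comm (c y) x, inf_comm]
      calc x ≤ c y ⊔ x := le_sup_right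
        _ = c y ⊔ (y ⊓ (x ⊔ c y)) := key.symm
        _ ≤ c y ⊔ (y ⊓ z) := sup_le_sup_left (le_inf inf_le_left h) _
    · intro h
      have step : y ⊓ (x ⊔ c y) ≤ y ⊓ ((y ⊓ z) ⊔ c y) := by
        apply inf_le_inf_left
        exact sup_le (h.trans (by rw [sup_comm])) le_sup_right
      calc y ⊓ (x ⊔ c y) ≤ y ⊓ ((y ⊓ z) ⊔ c y) := step
        _ = y ⊓ z := h2 y z
        _ ≤ z := inf_le_right
end

section
/- Let (L, ∨, ∧, ', 0, 1) be a bounded lattice with antitone involution, with x ⊙_S y := y ∧ (x ∨ y') and x →_I y := y ∨ (x' ∧ y'). If for all x, y, z, x ⊙_S y ≤ z implies x ≤ y →_I z, then L is orthomodular, i.e., x ≤ y implies y = x ∨ (y ∧ x'). -/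
/-- In a bounded lattice with antitone involution, with `x ⊙_S y := y ∧ (x ∨ y')`
and `x →_I y := y ∨ (x' ∧ y')`, condition (A) (`x ⊙_S y ≤ z` implies
`x ≤ z ⊔ (c y ⊓ c z)`) forces orthomodularity. -/
theorem stmt_18 {L : Type*} [Lattice L] [BoundedOrder L] (c : L → L)
    (hA : ∀ x y : L, x ≤ y → c y ≤ c x) (hI : ∀ x : L, c (c x) = x)
    (hbot : c (⊥ : L) = ⊤)
    (h : ∀ x y z : L, y ⊓ (x ⊔ c y) ≤ z → x ≤ z ⊔ (c y ⊓ c z)) :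
    ∀ x y : L, x ≤ y → y = x ⊔ (y ⊓ c x) := by
  intro x y hxy
  apply le_antisymm
  · have key := h y (c x) (y ⊓ c x) (by rw [hI]; rw [sup_eq_left.mpr hxy]; exact le_of_eq (inf_comm _ _))
    rw [hI] at key
    calc y ≤ (y ⊓ c x) ⊔ (x ⊓ c (y ⊓ c x)) := key
      _ ≤ (y ⊓ c x) ⊔ x := sup_le_sup_left inf_le_left _
      _ = x ⊔ (y ⊓ c x) := sup_comm _ _
  · exact sup_le hxy inf_le_left
end

section
/- Let (L, ∨, ∧, ', 0, 1) be a bounded lattice with antitone involution and define x →_I y := y ∨ (x' ∧ y'). Then there exists a binary operation ⊙ on L with (x ⊙ y ≤ z iff x ≤ y →_I z for all x, y, z) if and only if L is a Boolean algebra (with ' as complementation). -/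
/-- In a bounded lattice with antitone involution, with
`x →_I y := y ∨ (x' ∧ y')`, there is a binary operation `⊙` adjoint to `→_I`
iff the lattice is a Boolean algebra (distributive, with `'` a complementation). -/
theorem stmt_19 {L : Type*} [Lattice L] [BoundedOrder L] (c : L → L)
    (hA : ∀ x y : L, x ≤ y → c y ≤ c x) (hI : ∀ x : L, c (c x) = x) :
    (∃ odot : L → L → L, ∀ x y z : L, odot x y ≤ z ↔ x ≤ z ⊔ (c y ⊓ c z)) ↔
      ((∀ x y z : L, x ⊓ (y ⊔ z) = (x ⊓ y) ⊔ (x ⊓ z)) ∧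
       (∀ x : L, x ⊓ c x = ⊥ ∧ x ⊔ c x = ⊤)) := by
  have hcbot : c (⊥ : L) = ⊤ := by
    have : c (c ⊤) ≤ c ⊥ := hA ⊥ (c ⊤) bot_le
    rw [hI] at this
    exact top_le_iff.mp this
  have hctop : c (⊤ : L) = ⊥ := by
    have : c ⊤ ≤ c (c ⊥) := hA (c ⊥) ⊤ le_top
    rw [hI] at this
    exact le_bot_iff.mp this
  constructor
  · rintro ⟨odot, h⟩
    -- monotonicity of z ↦ z ⊔ (c y ⊓ c z)
    have mono : ∀ y z1 z2 : L, z1 ≤ z2 →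
        z1 ⊔ (c y ⊓ c z1) ≤ z2 ⊔ (c y ⊓ c z2) := by
      intro y z1 z2 hz
      exact (h _ y z2).mp (le_trans ((h _ y z1).mpr le_rfl) hz)
    -- key identity (⋆)
    have star : ∀ a z : L, a ≤ z ⊔ (a ⊓ c z) := by
      intro a z
      have := mono (c a) ⊥ z bot_le
      rwa [hI, hcbot, inf_top_eq, bot_sup_eq] at this
    have hsup : ∀ z : L, z ⊔ c z = ⊤ := by
      intro z
      have := star ⊤ z
      rw [top_inf_eq] at this
      exact top_le_iff.mp this
    have hinf : ∀ z : L, z ⊓ c z = ⊥ := by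
      intro z
      have h1 : (⊤ : L) ≤ c (z ⊓ c z) := by
        rw [← hsup z]
        exact sup_le (le_trans (le_of_eq (hI z).symm) (hA _ _ inf_le_right))
          (hA _ _ inf_le_left)
      have h2 : c (z ⊓ c z) = ⊤ := top_le_iff.mp h1
      have := hI (z ⊓ c z)
      rw [h2, hctop] at this
      exact this.symm
    -- disjoint implies below complement
    have disj : ∀ u v : L, u ⊓ v = ⊥ → u ≤ c v := by
      intro u v huv
      have := star u (c v)
      rwa [hI, huv, sup_bot_eq] at this
    refine ⟨?_, fun x => ⟨hinf x, hsup x⟩⟩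
    intro x y z
    refine le_antisymm ?_ le_inf_sup
    set d := x ⊓ y ⊔ x ⊓ z with hd
    set a := x ⊓ (y ⊔ z) with ha
    set e := a ⊓ c d with he
    have hey : e ⊓ y = ⊥ := by
      refine le_bot_iff.mp ?_
      have h1 : e ⊓ y ≤ d := le_trans (inf_le_inf_right y
        (le_trans inf_le_left inf_le_left)) le_sup_left
      have h2 : e ⊓ y ≤ c d := le_trans inf_le_left inf_le_right
      calc e ⊓ y ≤ d ⊓ c d := le_inf h1 h2
        _ = ⊥ := hinf d
    have hez : e ⊓ z = ⊥ := by
      refine le_bot_iff.mp ?_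
      have h1 : e ⊓ z ≤ d := le_trans (inf_le_inf_right z
        (le_trans inf_le_left inf_le_left)) le_sup_right
      have h2 : e ⊓ z ≤ c d := le_trans inf_le_left inf_le_right
      calc e ⊓ z ≤ d ⊓ c d := le_inf h1 h2
        _ = ⊥ := hinf d
    have hecy : e ≤ c y := disj e y hey
    have hecz : e ≤ c z := disj e z hez
    have hyce : y ≤ c e := by
      have := hA e (c y) hecy; rwa [hI] at this
    have hzce : z ≤ c e := by
      have := hA e (c z) hecz; rwa [hI] at this
    have hece : e ≤ c e :=
      le_trans (le_trans inf_le_left inf_le_right) (sup_le hyce hzce)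
    have hebot : e = ⊥ := by
      have : e ≤ e ⊓ c e := le_inf le_rfl hece
      rw [hinf e] at this
      exact le_bot_iff.mp this
    have := star a d
    rw [← he, hebot, sup_bot_eq] at this
    exact this
  · rintro ⟨hdist, hcomp⟩
    -- derive sup-distributivity
    have hdist' : ∀ x y z : L, x ⊔ (y ⊓ z) = (x ⊔ y) ⊓ (x ⊔ z) := by
      intro x y z
      symm
      calc (x ⊔ y) ⊓ (x ⊔ z) = ((x ⊔ y) ⊓ x) ⊔ ((x ⊔ y) ⊓ z) := hdist _ _ _
        _ = x ⊔ (z ⊓ (x ⊔ y)) := by rw [inf_of_le_right le_sup_left, inf_comm]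
        _ = x ⊔ ((z ⊓ x) ⊔ (z ⊓ y)) := by rw [hdist]
        _ = (x ⊔ (z ⊓ x)) ⊔ (z ⊓ y) := by rw [sup_assoc]
        _ = x ⊔ (y ⊓ z) := by
            rw [sup_of_le_left (inf_le_right : z ⊓ x ≤ x), inf_comm]
    refine ⟨fun x y => x ⊓ y, fun x y z => ?_⟩
    have key : z ⊔ (c y ⊓ c z) = z ⊔ c y := by
      rw [hdist', (hcomp z).2, inf_top_eq]
    rw [key]
    constructor
    · intro hxy
      calc x = x ⊓ (y ⊔ c y) := by rw [(hcomp y).2, inf_top_eq]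
        _ = (x ⊓ y) ⊔ (x ⊓ c y) := hdist _ _ _
        _ ≤ z ⊔ c y := sup_le_sup hxy inf_le_right
    · intro hx
      calc x ⊓ y ≤ (z ⊔ c y) ⊓ y := inf_le_inf_right y hx
        _ = (y ⊓ z) ⊔ (y ⊓ c y) := by rw [inf_comm, hdist]
        _ = y ⊓ z := by rw [(hcomp y).1, sup_bot_eq]
        _ ≤ z := inf_le_right
end
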